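/- arXiv:2604.17907 — 3 statements merged into one kernel-verified Lean document; each statement's English description precedes it below -/
import Mathlib

section
/- Let s ≥ 1 and k ≥ 1 be integers, let d ≥ 5 be an integer, and let G be an n-vertex d-regular graph containing 2s + 1 distinct vertices whose pairwise graph distances are all at least 4k. Then (√(d−1) + 2) · μ_{s+1}(G) − (√(d−1) − 2) · μ_{n−s+1}(G) ≥ 4(d−1)·cos(π/(2k)). -/
open Matrix SimpleGraph

attribute [local instance] Classical.propDecidable

set_option linter.unusedSectionVars false
set_option maxHeartbeats 1000000

/-- Eigenvalues of a real square matrix, sorted in non-decreasing order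
(junk value `0` if the matrix is not Hermitian). -/
noncomputable def sortedEigs {n : ℕ} (A : Matrix (Fin n) (Fin n) ℝ) : Fin n → ℝ :=
  if h : A.IsHermitian then h.eigenvalues ∘ Tuple.sort h.eigenvalues else 0

/-- `lapEig G i` is the `i`-th smallest Laplacian eigenvalue of `G` (1-based indexing),
so `lapEig G 2 = λ₂(G)` and `lapEig G n = λₙ(G)`; junk value `0` if `i` is out of range. -/
noncomputable def lapEig {n : ℕ} (G : SimpleGraph (Fin n)) (i : ℕ) : ℝ :=
  if h : i - 1 < n then sortedEigs (G.lapMatrix ℝ) ⟨i - 1, h⟩ else 0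

/-- `adjEig G i` is the `i`-th largest adjacency eigenvalue of `G` (1-based indexing),
so `adjEig G 1 = μ₁(G)` and `adjEig G n = μₙ(G)`; junk value `0` if `i` is out of range. -/
noncomputable def adjEig {n : ℕ} (G : SimpleGraph (Fin n)) (i : ℕ) : ℝ :=
  if h : n - i < n then sortedEigs (G.adjMatrix ℝ) ⟨n - i, h⟩ else 0

noncomputable def thK (k : ℕ) : ℝ := Real.pi / (2 * k)
noncomputable def bseq (k t : ℕ) : ℝ := Real.sin ((t + 1) * thK k)
noncomputable def qd (d : ℕ) : ℝ := (Real.sqrt ((d:ℝ) - 1))⁻¹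
noncomputable def vseq (k d t : ℕ) : ℝ := qd d ^ t * bseq k t

section trig
variable {k d : ℕ} (hk : 1 ≤ k) (hd : 5 ≤ d)
include hk

lemma th_pos : 0 < thK k := by
  have : (0:ℝ) < 2 * k := by positivity
  exact div_pos Real.pi_pos this

lemma th_le : thK k ≤ Real.pi / 2 := by
  unfold thK
  have h1 : (1:ℝ) ≤ (k:ℝ) := by exact_mod_cast hk
  rw [div_le_div_iff₀ (by linarith) (by norm_num)]
  nlinarith [Real.pi_pos]

lemma th_cos_nonneg : 0 ≤ Real.cos (thK k) := by
  have := th_pos (k := k) hk; have := th_le (k := k) hk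
  exact Real.cos_nonneg_of_mem_Icc ⟨by linarith [Real.pi_pos], by linarith⟩

lemma mul_th_le {m : ℕ} (hm : m ≤ 2 * k) : (m : ℝ) * thK k ≤ Real.pi := by
  unfold thK
  rw [div_eq_mul_inv, ← mul_assoc]
  have h2k : (0:ℝ) < 2 * k := by positivity
  rw [mul_comm (m:ℝ), mul_assoc, ← div_eq_mul_inv]  -- π * (m / (2k))
  have : (m : ℝ) / (2 * k) ≤ 1 := by
    rw [div_le_one h2k]; exact_mod_cast hm
  nlinarith [Real.pi_pos]

lemma bseq_nonneg {t : ℕ} (ht : t ≤ 2 * k - 1) : 0 ≤ bseq k t := by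
  unfold bseq
  apply Real.sin_nonneg_of_nonneg_of_le_pi
  · have := th_pos (k := k) hk
    have h1 : (0:ℝ) ≤ (t:ℝ) + 1 := by positivity
    positivity
  · have : ((t:ℝ) + 1) = ((t + 1 : ℕ) : ℝ) := by push_cast; ring
    rw [this]; exact mul_th_le hk (by omega)

lemma bseq_pos {t : ℕ} (ht : t ≤ 2 * k - 2) : 0 < bseq k t := by
  unfold bseq
  apply Real.sin_pos_of_pos_of_lt_pi
  · have := th_pos (k := k) hk
    have h1 : (0:ℝ) < (t:ℝ) + 1 := by positivity
    positivity
  · have h1 : ((t:ℝ) + 1) = ((t + 1 : ℕ) : ℝ) := by push_cast; ring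
    have h2 : ((t + 1 : ℕ) : ℝ) * thK k ≤ ((2*k - 1 : ℕ) : ℝ) * thK k := by
      have := th_pos (k := k) hk
      have : ((t + 1 : ℕ) : ℝ) ≤ ((2*k - 1 : ℕ) : ℝ) := by exact_mod_cast (by omega : t + 1 ≤ 2*k - 1)
      nlinarith [th_pos (k := k) hk]
    have h3 : ((2*k - 1 : ℕ) : ℝ) * thK k < Real.pi := by
      unfold thK
      have h2k : (0:ℝ) < 2 * k := by positivity
      rw [div_eq_mul_inv, ← mul_assoc, mul_comm _ Real.pi, mul_assoc, ← div_eq_mul_inv]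
      have : ((2*k - 1 : ℕ) : ℝ) / (2 * k) < 1 := by
        rw [div_lt_one h2k]
        exact_mod_cast (by omega : 2*k - 1 < 2*k)
      nlinarith [Real.pi_pos]
    rw [h1]; linarith

lemma bseq_top : bseq k (2 * k - 1) = 0 := by
  unfold bseq
  have h : ((2 * k - 1 : ℕ) : ℝ) + 1 = 2 * k := by
    have h1 : 1 ≤ 2 * k := by omega
    push_cast [h1]; ring
  rw [h]
  unfold thK
  rw [mul_div_cancel₀ _ (by positivity : (2:ℝ) * k ≠ 0)]
  exact Real.sin_pi

omit hk in
lemma bseq_rec (t : ℕ) : bseq k t + bseq k (t + 2) = 2 * Real.cos (thK k) * bseq k (t + 1) := by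
  unfold bseq
  have h1 : ((t:ℝ) + 2 + 1) * thK k = ((t:ℝ) + 1 + 1) * thK k + thK k := by push_cast; ring
  have h2 : ((t:ℝ) + 1) * thK k = ((t:ℝ) + 1 + 1) * thK k - thK k := by ring
  push_cast
  rw [h1, h2, Real.sin_add, Real.sin_sub]
  ring

omit hk in
lemma sin_succ_le {x t' : ℝ} (ht0 : 0 < t') (htp : t' ≤ Real.pi / 2) (htx : t' ≤ x)
    (hx : x ≤ Real.pi) : Real.sin (x + t') ≤ 2 * Real.sin x := by
  rw [Real.sin_add]
  have hsx : 0 ≤ Real.sin x := Real.sin_nonneg_of_nonneg_of_le_pi (by linarith) hx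
  have hst : 0 ≤ Real.sin t' := Real.sin_nonneg_of_nonneg_of_le_pi ht0.le (by linarith [Real.pi_pos])
  rcases le_or_gt (Real.cos x) 0 with h | h
  · nlinarith [Real.cos_le_one t', Real.sin_le_one t']
  · have hx2 : x < Real.pi / 2 := by
      by_contra hc
      push_neg at hc
      have : Real.cos x ≤ 0 := Real.cos_nonpos_of_pi_div_two_le_of_le hc (by linarith [Real.pi_pos])
      linarith
    have : Real.sin t' ≤ Real.sin x := by
      apply Real.sin_le_sin_of_le_of_le_pi_div_two (by linarith) hx2.le htx
    nlinarith [Real.cos_le_one x, Real.cos_le_one t']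

lemma bseq_dbl {t : ℕ} (ht : t + 1 ≤ 2 * k - 1) : bseq k (t + 1) ≤ 2 * bseq k t := by
  unfold bseq
  have h : ((t + 1 : ℕ) : ℝ) + 1 = ((t:ℝ) + 1) + 1 := by push_cast; ring
  have h2 : (((t:ℝ) + 1) + 1) * thK k = ((t:ℝ)+1) * thK k + thK k := by ring
  rw [h, h2]
  apply sin_succ_le (th_pos hk) (th_le hk)
  · have := th_pos (k := k) hk; nlinarith [Nat.cast_nonneg (α := ℝ) t]
  · have : ((t:ℝ) + 1) = ((t + 1 : ℕ) : ℝ) := by push_cast; ring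
    rw [this]; exact mul_th_le hk (by omega)

end trig

lemma lam_sq {d : ℕ} (hd : 5 ≤ d) : Real.sqrt ((d:ℝ) - 1) ^ 2 = (d:ℝ) - 1 := by
  rw [Real.sq_sqrt]
  have : (5:ℝ) ≤ d := by exact_mod_cast hd
  linarith

lemma lam_ge2 {d : ℕ} (hd : 5 ≤ d) : 2 ≤ Real.sqrt ((d:ℝ) - 1) := by
  have h5 : (5:ℝ) ≤ (d:ℝ) := by exact_mod_cast hd
  nlinarith [lam_sq hd, Real.sqrt_nonneg ((d:ℝ) - 1)]

lemma lam_pos {d : ℕ} (hd : 5 ≤ d) : 0 < Real.sqrt ((d:ℝ) - 1) :=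
  lt_of_lt_of_le (by norm_num) (lam_ge2 hd)

lemma qd_pos {d : ℕ} (hd : 5 ≤ d) : 0 < qd d := inv_pos.2 (lam_pos hd)

lemma qd_le_half {d : ℕ} (hd : 5 ≤ d) : qd d ≤ 1 / 2 := by
  unfold qd
  rw [inv_le_comm₀ (lam_pos hd) (by norm_num)]
  simpa using lam_ge2 hd

lemma lam_mul_qd {d : ℕ} (hd : 5 ≤ d) : Real.sqrt ((d:ℝ) - 1) * qd d = 1 :=
  mul_inv_cancel₀ (lam_pos hd).ne'

lemma dm1_mul_qd {d : ℕ} (hd : 5 ≤ d) : ((d:ℝ) - 1) * qd d = Real.sqrt ((d:ℝ) - 1) := by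
  linear_combination Real.sqrt ((d:ℝ)-1) * lam_mul_qd hd - qd d * lam_sq hd

lemma qd_sq {d : ℕ} (hd : 5 ≤ d) : ((d:ℝ) - 1) * qd d ^ 2 = 1 := by
  calc ((d:ℝ) - 1) * qd d ^ 2 = (((d:ℝ) - 1) * qd d) * qd d := by ring
    _ = Real.sqrt ((d:ℝ)-1) * qd d := by rw [dm1_mul_qd hd]
    _ = 1 := lam_mul_qd hd

lemma vseq_nonneg {k d : ℕ} (hk : 1 ≤ k) (hd : 5 ≤ d) {t : ℕ} (ht : t ≤ 2 * k - 1) :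
    0 ≤ vseq k d t :=
  mul_nonneg (pow_nonneg (qd_pos hd).le t) (bseq_nonneg hk ht)

lemma vseq_pos {k d : ℕ} (hk : 1 ≤ k) (hd : 5 ≤ d) {t : ℕ} (ht : t ≤ 2 * k - 2) :
    0 < vseq k d t :=
  mul_pos (pow_pos (qd_pos hd) t) (bseq_pos hk ht)

lemma vseq_identity {k d : ℕ} (hd : 5 ≤ d) (r : ℕ) :
    vseq k d r + ((d:ℝ) - 1) * vseq k d (r + 2)
      = (2 * Real.sqrt ((d:ℝ) - 1) * Real.cos (thK k)) * vseq k d (r + 1) := by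
  unfold vseq
  have hlq := lam_mul_qd hd
  have hq2 := qd_sq hd
  have hrec := bseq_rec (k := k) r
  linear_combination (qd d ^ r) * hrec + (qd d ^ r * bseq k (r+2)) * hq2
    + (-(2 * Real.cos (thK k) * bseq k (r+1) * qd d ^ r)) * hlq

lemma vseq_same {k d : ℕ} (hk : 1 ≤ k) (hd : 5 ≤ d) {t : ℕ} (ht : t + 1 ≤ 2 * k - 1) :
    vseq k d (t + 1) ≤ 2 * qd d * vseq k d t := by
  unfold vseq
  rw [pow_succ]
  have h := bseq_dbl hk ht
  have hq : (0:ℝ) < qd d ^ t * qd d := mul_pos (pow_pos (qd_pos hd) t) (qd_pos hd)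
  nlinarith [mul_nonneg hq.le (sub_nonneg.2 h)]

lemma vseq_back {k d : ℕ} (hk : 1 ≤ k) (hd : 5 ≤ d) {r : ℕ} (hr : r + 2 ≤ 2 * k - 1) :
    vseq k d (r + 2) ≤ vseq k d r := by
  have h1 : bseq k (r+2) ≤ 2 * bseq k (r+1) := bseq_dbl hk hr
  have h2 : bseq k (r+1) ≤ 2 * bseq k r := bseq_dbl hk (by omega)
  unfold vseq
  have hq := qd_pos hd
  have hqh := qd_le_half hd
  have hb : 0 ≤ bseq k (r+2) := bseq_nonneg hk (by omega)
  have hqr : (0:ℝ) < qd d ^ r := pow_pos hq r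
  have hq2' : qd d ^ 2 ≤ 1/4 := by nlinarith
  have hb4 : bseq k (r+2) ≤ 4 * bseq k r := by linarith
  have hstep : qd d ^ 2 * bseq k (r+2) ≤ bseq k r := by
    nlinarith [mul_le_mul_of_nonneg_right hq2' hb]
  calc qd d ^ (r+2) * bseq k (r+2) = qd d ^ r * (qd d ^ 2 * bseq k (r+2)) := by ring
    _ ≤ qd d ^ r * bseq k r := by nlinarith [mul_le_mul_of_nonneg_left hstep hqr.le]

lemma bseq_one {k : ℕ} : bseq k 1 = 2 * Real.cos (thK k) * bseq k 0 := by
  unfold bseq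
  push_cast
  rw [show ((1:ℝ)+1) * thK k = thK k + thK k by ring, Real.sin_add]
  rw [show ((0:ℝ)+1) * thK k = thK k by ring]
  ring

lemma vseq_center {k d : ℕ} (hk : 1 ≤ k) (hd : 5 ≤ d) :
    (2 * Real.sqrt ((d:ℝ) - 1) * Real.cos (thK k)) * vseq k d 0 ≤ (d:ℝ) * vseq k d 1 := by
  unfold vseq
  rw [bseq_one]
  have hq := qd_pos hd
  have hb0 : 0 < bseq k 0 := bseq_pos hk (by omega)
  have hcos : 0 ≤ Real.cos (thK k) := th_cos_nonneg hk
  have key : Real.sqrt ((d:ℝ) - 1) ≤ (d:ℝ) * qd d := by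
    have h2 := dm1_mul_qd hd
    nlinarith
  have hfac : (0:ℝ) ≤ 2 * Real.cos (thK k) * bseq k 0 := by positivity
  nlinarith [mul_le_mul_of_nonneg_left key hfac]

section graph
variable {V : Type*} [Fintype V] [DecidableEq V]

/-- test function on the ball of radius `2k-2` around `u` -/
noncomputable def FFb (G : SimpleGraph V) (k d : ℕ) (u x : V) : ℝ :=
  if G.edist u x ≤ (2*k - 2 : ℕ) then vseq k d (G.edist u x).toNat else 0

/-- sign flip for「odd levels -/
noncomputable def GGb (G : SimpleGraph V) (k d : ℕ) (u x : V) : ℝ :=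
  (-1 : ℝ) ^ (G.edist u x).toNat * FFb G k d u x

/-- edge coefficient : `2 q` for an edge within a sphere, `1` for a crossing edge -/
noncomputable def cfb (G : SimpleGraph V) (d : ℕ) (u x y : V) : ℝ :=
  if G.edist u x = G.edist u y then 2 * qd d else 1

variable {G : SimpleGraph V} {k d : ℕ} {u : V}

omit [Fintype V] [DecidableEq V] in
lemma cfb_nonneg (hd : 5 ≤ d) (x y : V) : 0 ≤ cfb G d u x y := by
  have h := qd_pos hd
  unfold cfb; split
  · linarith
  · norm_num

omit [Fintype V] [DecidableEq V] in
lemma edist_ne_top_of_le_coe {x : V} {m : ℕ} (h : G.edist u x ≤ (m:ℕ∞)) :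
    G.edist u x ≠ ⊤ := by
  intro hh; rw [hh, top_le_iff] at h; exact ENat.coe_ne_top m h

omit [Fintype V] [DecidableEq V] in
lemma cfb_le_one (hd : 5 ≤ d) (x y : V) : cfb G d u x y ≤ 1 := by
  have h := qd_le_half hd
  unfold cfb; split
  · linarith
  · exact le_refl 1

lemma FFb_eq (hk : 1 ≤ k) {t : ℕ} (ht : t ≤ 2*k - 1) {x : V} (hx : G.edist u x = (t:ℕ∞)) :
    FFb G k d u x = vseq k d t := by
  unfold FFb
  rw [hx]
  rcases Nat.lt_or_ge t (2*k - 1) with h | h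
  · rw [if_pos (by exact_mod_cast (by omega : t ≤ 2*k-2))]
    simp
  · have ht' : t = 2*k - 1 := by omega
    rw [if_neg (by rw [Nat.cast_le]; omega)]
    subst ht'
    unfold vseq
    rw [bseq_top hk]
    ring

lemma FFb_nonneg (hk : 1 ≤ k) (hd : 5 ≤ d) (x : V) : 0 ≤ FFb G k d u x := by
  unfold FFb; split
  · rename_i h
    have hne : G.edist u x ≠ ⊤ := edist_ne_top_of_le_coe h
    have : (G.edist u x).toNat ≤ 2*k-2 := by
      rw [← ENat.coe_toNat hne, Nat.cast_le] at h; exact h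
    exact vseq_nonneg hk hd (by omega)
  · exact le_refl 0

lemma FFb_supp {x : V} (hx : FFb G k d u x ≠ 0) : G.edist u x ≤ (2*k - 2 : ℕ) := by
  by_contra h
  exact hx (by unfold FFb; rw [if_neg h])

/-- every vertex in the support has a representation `edist = t ≤ 2k-2`. -/
lemma FFb_supp' {x : V} (hx : FFb G k d u x ≠ 0) :
    ∃ t : ℕ, G.edist u x = (t:ℕ∞) ∧ t ≤ 2*k - 2 := by
  have h := FFb_supp hx
  have hne : G.edist u x ≠ ⊤ := edist_ne_top_of_le_coe h
  refine ⟨(G.edist u x).toNat, (ENat.coe_toNat hne).symm, ?_⟩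
  rw [← ENat.coe_toNat hne, Nat.cast_le] at h; exact h

lemma level_bound (hadj : G.Adj x y) {r : ℕ} (hx : G.edist u x = (r:ℕ∞)) :
    ∃ m : ℕ, G.edist u y = (m:ℕ∞) ∧ m ≤ r + 1 ∧ r ≤ m + 1 := by
  have h1 : G.edist x y = 1 := by rw [edist_eq_one_iff_adj]; exact hadj
  have h2 : G.edist y x = 1 := by rw [edist_comm]; exact h1
  have hle : G.edist u y ≤ (r:ℕ∞) + 1 := by
    calc G.edist u y ≤ G.edist u x + G.edist x y := SimpleGraph.edist_triangle
      _ = (r:ℕ∞) + 1 := by rw [hx, h1]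
  have hne : G.edist u y ≠ ⊤ := by
    have : (r:ℕ∞) + 1 = ((r+1:ℕ):ℕ∞) := by push_cast; ring
    rw [this] at hle
    exact edist_ne_top_of_le_coe hle
  refine ⟨(G.edist u y).toNat, (ENat.coe_toNat hne).symm, ?_, ?_⟩
  · rw [← ENat.coe_toNat hne] at hle
    exact_mod_cast hle
  · have : G.edist u x ≤ G.edist u y + 1 := by
      calc G.edist u x ≤ G.edist u y + G.edist y x := SimpleGraph.edist_triangle
        _ = G.edist u y + 1 := by rw [h2]
    rw [hx, ← ENat.coe_toNat hne] at this
    exact_mod_cast this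

lemma parent_exists {r : ℕ} (hx : G.edist u x = ((r+1:ℕ):ℕ∞)) :
    ∃ y, G.Adj x y ∧ G.edist u y = (r:ℕ∞) := by
  obtain ⟨p, hp⟩ := exists_walk_of_edist_eq_coe hx
  have hpr : p.reverse.length = r + 1 := by rw [SimpleGraph.Walk.length_reverse]; exact hp
  cases hrev : p.reverse with
  | nil => rw [hrev] at hpr; simp at hpr
  | cons hadj q =>
    rename_i y₀
    rw [hrev] at hpr
    rw [SimpleGraph.Walk.length_cons] at hpr
    have hql : q.length = r := by omega
    refine ⟨y₀, hadj, ?_⟩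
    have hle : G.edist u y₀ ≤ (r:ℕ∞) := by
      have := SimpleGraph.edist_le q.reverse
      rw [SimpleGraph.Walk.length_reverse, hql] at this
      exact this
    obtain ⟨m, hm, hm1, hm2⟩ := level_bound hadj hx
    rw [hm] at hle ⊢
    have : m ≤ r := by exact_mod_cast hle
    have : r ≤ m := by omega
    norm_cast
    omega


lemma core_ineq (hk : 1 ≤ k) (hd : 5 ≤ d) (hreg : G.IsRegularOfDegree d) (x : V) :
    (2 * Real.sqrt ((d:ℝ) - 1) * Real.cos (thK k)) * FFb G k d u x
      ≤ ∑ y ∈ G.neighborFinset x, cfb G d u x y * FFb G k d u y := by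
  by_cases hx : FFb G k d u x = 0
  · rw [hx, mul_zero]
    exact Finset.sum_nonneg fun y _ =>
      mul_nonneg (cfb_nonneg hd x y) (FFb_nonneg hk hd y)
  · obtain ⟨t, het, ht⟩ := FFb_supp' hx
    rcases t with _ | r
    · -- center
      have hux : u = x := by
        rw [← edist_eq_zero_iff (G := G)]; exact_mod_cast het
      subst hux
      have hsum : ∀ y ∈ G.neighborFinset u, cfb G d u u y * FFb G k d u y = vseq k d 1 := by
        intro y hy
        rw [SimpleGraph.mem_neighborFinset] at hy
        have hey : G.edist u y = (1:ℕ∞) := by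
          rw [edist_eq_one_iff_adj]; exact hy
        have hcf : cfb G d u u y = 1 := by
          unfold cfb
          rw [if_neg]
          rw [SimpleGraph.edist_self, hey]
          simp
        rw [hcf, one_mul]
        exact FFb_eq hk (t := 1) (by omega) (by exact_mod_cast hey)
      rw [Finset.sum_congr rfl hsum, Finset.sum_const,
        SimpleGraph.card_neighborFinset_eq_degree, hreg u, nsmul_eq_mul]
      rw [FFb_eq hk (t := 0) (by omega) (by exact_mod_cast het)]
      exact vseq_center hk hd
    · -- level r+1
      have het' : G.edist u x = ((r+1:ℕ):ℕ∞) := by exact_mod_cast het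
      obtain ⟨y₀, hadj₀, hey₀⟩ := parent_exists het'
      have hy₀mem : y₀ ∈ G.neighborFinset x := by
        rw [SimpleGraph.mem_neighborFinset]; exact hadj₀
      rw [← Finset.add_sum_erase _ _ hy₀mem]
      have hterm₀ : cfb G d u x y₀ * FFb G k d u y₀ = vseq k d r := by
        have hcf : cfb G d u x y₀ = 1 := by
          unfold cfb
          rw [if_neg]
          rw [het', hey₀]
          intro hcontra
          have : r + 1 = r := by exact_mod_cast hcontra
          omega
        rw [hcf, one_mul]
        exact FFb_eq hk (t := r) (by omega) hey₀
      have hrest : ∀ y ∈ (G.neighborFinset x).erase y₀,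
          vseq k d (r+2) ≤ cfb G d u x y * FFb G k d u y := by
        intro y hy
        have hadj : G.Adj x y := by
          rw [← SimpleGraph.mem_neighborFinset]
          exact Finset.mem_of_mem_erase hy
        obtain ⟨m, hem, hm1, hm2⟩ := level_bound hadj het'
        have hcases : m = r ∨ m = r + 1 ∨ m = r + 2 := by omega
        rcases hcases with hm | hm | hm
        · rw [hm] at hem
          have hcf : cfb G d u x y = 1 := by
            unfold cfb; rw [if_neg]
            rw [het', hem]
            intro hcontra
            have : r + 1 = r := by exact_mod_cast hcontra
            omega
          rw [hcf, one_mul, FFb_eq hk (t := r) (by omega) hem]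
          exact vseq_back hk hd (by omega)
        · rw [hm] at hem
          have hcf : cfb G d u x y = 2 * qd d := by
            unfold cfb; rw [if_pos]
            rw [het', hem]
          rw [hcf, FFb_eq hk (t := r+1) (by omega) hem]
          exact vseq_same hk hd (by omega)
        · rw [hm] at hem
          have hcf : cfb G d u x y = 1 := by
            unfold cfb; rw [if_neg]
            rw [het', hem]
            intro hcontra
            have : r + 1 = r + 2 := by exact_mod_cast hcontra
            omega
          rw [hcf, one_mul, FFb_eq hk (t := r+2) (by omega) hem]
      have hcard : ((G.neighborFinset x).erase y₀).card = d - 1 := by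
        rw [Finset.card_erase_of_mem hy₀mem,
          SimpleGraph.card_neighborFinset_eq_degree, hreg x]
      have hsum2 : ((d:ℝ) - 1) * vseq k d (r+2)
          ≤ ∑ y ∈ (G.neighborFinset x).erase y₀, cfb G d u x y * FFb G k d u y := by
        have := Finset.card_nsmul_le_sum _ _ _ hrest
        rw [hcard, nsmul_eq_mul] at this
        have hdc : ((d - 1 : ℕ) : ℝ) = (d:ℝ) - 1 := by
          have : 1 ≤ d := by omega
          push_cast [this]; ring
        rw [hdc] at this
        exact this
      rw [hterm₀, FFb_eq hk (t := r+1) (by omega) het']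
      rw [← vseq_identity hd r]
      linarith

lemma signterm_eq (hd : 5 ≤ d) {x y : V} (hadj : G.Adj x y) :
    (Real.sqrt ((d:ℝ)-1) + 2) * (FFb G k d u x * FFb G k d u y)
      - (Real.sqrt ((d:ℝ)-1) - 2) * (GGb G k d u x * GGb G k d u y)
    = 2 * Real.sqrt ((d:ℝ)-1) * (cfb G d u x y * (FFb G k d u x * FFb G k d u y)) := by
  by_cases hx : FFb G k d u x = 0
  · unfold GGb; rw [hx]; ring
  by_cases hy : FFb G k d u y = 0
  · unfold GGb; rw [hy]; ring
  obtain ⟨a, hea, hta⟩ := FFb_supp' hx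
  obtain ⟨b, heb, htb⟩ := FFb_supp' hy
  obtain ⟨m, hem, hm1, hm2⟩ := level_bound hadj hea
  have hmb : b = m := by
    rw [hem] at heb
    have := heb.symm
    exact_mod_cast this
  rw [hmb] at htb
  clear heb hmb
  unfold GGb
  rw [hea, hem, ENat.toNat_coe, ENat.toNat_coe]
  set P := FFb G k d u x * FFb G k d u y with hP
  rcases eq_or_ne a m with hab | hab
  · have hcf : cfb G d u x y = 2 * qd d := by
      unfold cfb; rw [if_pos]; rw [hea, hem, hab]
    rw [hcf]
    have hsq : ((-1:ℝ))^a * (-1:ℝ)^m = 1 := by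
      rw [hab, ← pow_add]
      exact Even.neg_one_pow ⟨m, rfl⟩
    have hlq := lam_mul_qd hd
    linear_combination (-((Real.sqrt ((d:ℝ)-1) - 2) * P)) * hsq + (-(4*P)) * hlq
  · have hcf : cfb G d u x y = 1 := by
      unfold cfb; rw [if_neg]
      rw [hea, hem]
      intro hc; exact hab (by exact_mod_cast hc)
    rw [hcf]
    have hcase : m = a + 1 ∨ a = m + 1 := by omega
    have hsgn : ((-1:ℝ))^a * (-1:ℝ)^m = -1 := by
      rcases hcase with hc | hc
      · rw [hc, pow_succ, ← mul_assoc, ← pow_add, Even.neg_one_pow ⟨a, rfl⟩]; norm_num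
      · rw [hc, pow_succ,
          show ((-1:ℝ))^m * (-1) * ((-1:ℝ))^m = -(((-1:ℝ))^m * ((-1:ℝ))^m) from by ring,
          ← pow_add, Even.neg_one_pow ⟨m, rfl⟩]
    linear_combination (-((Real.sqrt ((d:ℝ)-1) - 2) * P)) * hsgn

lemma perball (hk : 1 ≤ k) (hd : 5 ≤ d) (hreg : G.IsRegularOfDegree d) :
    4 * ((d:ℝ)-1) * Real.cos (thK k) * (FFb G k d u ⬝ᵥ FFb G k d u)
      ≤ (Real.sqrt ((d:ℝ)-1) + 2) * (FFb G k d u ⬝ᵥ (G.adjMatrix ℝ *ᵥ FFb G k d u))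
        - (Real.sqrt ((d:ℝ)-1) - 2) * (GGb G k d u ⬝ᵥ (G.adjMatrix ℝ *ᵥ GGb G k d u)) := by
  have expand : ∀ (h : V → ℝ), h ⬝ᵥ (G.adjMatrix ℝ *ᵥ h)
      = ∑ x, ∑ y ∈ G.neighborFinset x, h x * h y := by
    intro h
    simp [dotProduct, adjMatrix_mulVec_apply, Finset.mul_sum]
  rw [expand, expand]
  rw [Finset.mul_sum, Finset.mul_sum, ← Finset.sum_sub_distrib]
  have step1 : ∀ x : V,
      2 * Real.sqrt ((d:ℝ)-1) * (FFb G k d u x * ((2 * Real.sqrt ((d:ℝ)-1) * Real.cos (thK k)) * FFb G k d u x))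
      ≤ (Real.sqrt ((d:ℝ)-1) + 2) * ∑ y ∈ G.neighborFinset x, FFb G k d u x * FFb G k d u y
        - (Real.sqrt ((d:ℝ)-1) - 2) * ∑ y ∈ G.neighborFinset x, GGb G k d u x * GGb G k d u y := by
    intro x
    rw [Finset.mul_sum, Finset.mul_sum, ← Finset.sum_sub_distrib]
    have hs : ∀ y ∈ G.neighborFinset x,
        (Real.sqrt ((d:ℝ)-1) + 2) * (FFb G k d u x * FFb G k d u y)
          - (Real.sqrt ((d:ℝ)-1) - 2) * (GGb G k d u x * GGb G k d u y)
        = 2 * Real.sqrt ((d:ℝ)-1) * (cfb G d u x y * (FFb G k d u x * FFb G k d u y)) := by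
      intro y hy
      exact signterm_eq hd ((SimpleGraph.mem_neighborFinset _ _ _).1 hy)
    rw [Finset.sum_congr rfl hs]
    have h2 : ∑ y ∈ G.neighborFinset x, 2 * Real.sqrt ((d:ℝ)-1) * (cfb G d u x y * (FFb G k d u x * FFb G k d u y))
        = 2 * Real.sqrt ((d:ℝ)-1) * (FFb G k d u x * ∑ y ∈ G.neighborFinset x, cfb G d u x y * FFb G k d u y) := by
      rw [Finset.mul_sum, Finset.mul_sum]
      apply Finset.sum_congr rfl
      intro y _
      ring
    rw [h2]
    have hcore := core_ineq (u := u) hk hd hreg x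
    have hnn : 0 ≤ FFb G k d u x := FFb_nonneg hk hd x
    have hlam : (0:ℝ) ≤ 2 * Real.sqrt ((d:ℝ)-1) := by positivity
    apply mul_le_mul_of_nonneg_left _ hlam
    exact mul_le_mul_of_nonneg_left hcore hnn
  calc 4 * ((d:ℝ)-1) * Real.cos (thK k) * ∑ x, FFb G k d u x * FFb G k d u x
      = ∑ x : V, 2 * Real.sqrt ((d:ℝ)-1) * (FFb G k d u x * ((2 * Real.sqrt ((d:ℝ)-1) * Real.cos (thK k)) * FFb G k d u x)) := by
        rw [Finset.mul_sum]
        apply Finset.sum_congr rfl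
        intro x _
        linear_combination (-(4 * Real.cos (thK k) * FFb G k d u x * FFb G k d u x)) * lam_sq hd
    _ ≤ _ := Finset.sum_le_sum fun x _ => step1 x

lemma far_mul_zero (hk : 1 ≤ k) {u₁ u₂ : V} (hfar : ((4*k:ℕ):ℕ∞) ≤ G.edist u₁ u₂)
    {x y : V} (hxy : G.edist x y ≤ 1) :
    FFb G k d u₁ x * FFb G k d u₂ y = 0 := by
  by_contra hne
  have hne' : FFb G k d u₁ x ≠ 0 ∧ FFb G k d u₂ y ≠ 0 := mul_ne_zero_iff.mp hne
  have h1 := FFb_supp hne'.1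
  have h2 := FFb_supp hne'.2
  have htri : G.edist u₁ u₂ ≤ ((4*k - 3:ℕ):ℕ∞) := by
    calc G.edist u₁ u₂ ≤ G.edist u₁ x + G.edist x u₂ := SimpleGraph.edist_triangle
      _ ≤ G.edist u₁ x + (G.edist x y + G.edist y u₂) := by
          exact add_le_add le_rfl SimpleGraph.edist_triangle
      _ ≤ ((2*k-2:ℕ):ℕ∞) + (1 + ((2*k-2:ℕ):ℕ∞)) := by
          apply add_le_add h1
          apply add_le_add hxy
          rw [SimpleGraph.edist_comm]
          exact h2
      _ = ((4*k - 3:ℕ):ℕ∞) := by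
          have : (4*k - 3 : ℕ) = (2*k-2) + (1 + (2*k-2)) := by omega
          rw [this]
          push_cast
          ring
  have := le_trans hfar htri
  rw [Nat.cast_le] at this
  omega

end graph

section spectral
variable {n m : ℕ} {A : Matrix (Fin n) (Fin n) ℝ}

lemma inner_eq_dot (x y : EuclideanSpace ℝ (Fin n)) :
    (inner ℝ x y : ℝ) = (x : Fin n → ℝ) ⬝ᵥ (y : Fin n → ℝ) := by
  simp [PiLp.inner_apply, RCLike.inner_apply, dotProduct, mul_comm]

lemma herm_symm_dot (hA : A.IsHermitian) (v w : Fin n → ℝ) :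
    v ⬝ᵥ (A *ᵥ w) = (A *ᵥ v) ⬝ᵥ w := by
  have ht : Aᵀ = A := by
    ext i j
    have := congrFun (congrFun hA.eq i) j
    simpa [Matrix.conjTranspose_apply] using this
  rw [Matrix.dotProduct_mulVec, ← Matrix.mulVec_transpose, ht]

lemma dot_sum_right {N : ℕ} (v : Fin n → ℝ) (c : Fin N → ℝ) (w : Fin N → Fin n → ℝ) :
    v ⬝ᵥ (∑ j, c j • w j) = ∑ j, c j * (v ⬝ᵥ w j) := by
  simp only [dotProduct, Finset.sum_apply, Pi.smul_apply, smul_eq_mul]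
  calc ∑ x, v x * ∑ j, c j * w j x = ∑ x, ∑ j, c j * (v x * w j x) := by
        refine Finset.sum_congr rfl fun x _ => ?_
        rw [Finset.mul_sum]
        exact Finset.sum_congr rfl fun j _ => by ring
    _ = ∑ j, ∑ x, c j * (v x * w j x) := Finset.sum_comm
    _ = ∑ j, c j * ∑ x, v x * w j x := by
        exact Finset.sum_congr rfl fun j _ => by rw [Finset.mul_sum]

lemma sum_dot {N : ℕ} (c : Fin N → ℝ) (w : Fin N → Fin n → ℝ) (v : Fin n → ℝ) :
    (∑ j, c j • w j) ⬝ᵥ v = ∑ j, c j * (w j ⬝ᵥ v) := by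
  simp only [dotProduct, Finset.sum_apply, Pi.smul_apply, smul_eq_mul]
  calc ∑ x, (∑ j, c j * w j x) * v x = ∑ x, ∑ j, c j * (w j x * v x) := by
        refine Finset.sum_congr rfl fun x _ => ?_
        rw [Finset.sum_mul]
        exact Finset.sum_congr rfl fun j _ => by ring
    _ = ∑ j, ∑ x, c j * (w j x * v x) := Finset.sum_comm
    _ = ∑ j, c j * ∑ x, w j x * v x := by
        exact Finset.sum_congr rfl fun j _ => by rw [Finset.mul_sum]

lemma sum_dot' (c : Fin n → ℝ) (w : Fin n → Fin n → ℝ) (v : Fin n → ℝ) :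
    (∑ j, c j • w j) ⬝ᵥ v = ∑ j, c j * (w j ⬝ᵥ v) := sum_dot c w v

lemma count_ge (hA : A.IsHermitian) (α : ℝ) (F : Fin m → Fin n → ℝ)
    (hpos : ∀ i, 0 < F i ⬝ᵥ F i)
    (horth : ∀ i j, i ≠ j → F i ⬝ᵥ F j = 0)
    (hAorth : ∀ i j, i ≠ j → F i ⬝ᵥ (A *ᵥ F j) = 0)
    (hray : ∀ i, α * (F i ⬝ᵥ F i) ≤ F i ⬝ᵥ (A *ᵥ F i)) :
    m ≤ (Finset.univ.filter (fun j => α ≤ hA.eigenvalues j)).card := by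
  by_contra hcard
  push_neg at hcard
  set T := Finset.univ.filter (fun j => α ≤ hA.eigenvalues j) with hT
  set ev : Fin n → Fin n → ℝ := fun j => ⇑(hA.eigenvectorBasis j) with hev
  set M : Matrix {j // j ∈ T} (Fin m) ℝ := Matrix.of (fun j i => ev j.1 ⬝ᵥ F i) with hM
  have hnotinj : ¬ Function.Injective M.mulVecLin := by
    intro hinj
    have hle := LinearMap.finrank_le_finrank_of_injective hinj
    rw [Module.finrank_fintype_fun_eq_card, Module.finrank_fintype_fun_eq_card,
      Fintype.card_fin, Fintype.card_coe] at hle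
    omega
  rw [Function.not_injective_iff] at hnotinj
  obtain ⟨c1, c2, heq, hne⟩ := hnotinj
  set c : Fin m → ℝ := c1 - c2 with hc
  have hcne : c ≠ 0 := sub_ne_zero.mpr hne
  have hMc : M *ᵥ c = 0 := by
    have : M.mulVecLin c = 0 := by
      rw [hc, map_sub, heq, sub_self]
    simpa using this
  set h : Fin n → ℝ := ∑ i, c i • F i with hh
  have hFdot : ∀ i : Fin m, F i ⬝ᵥ h = c i * (F i ⬝ᵥ F i) := by
    intro i
    rw [hh, dot_sum_right, Finset.sum_eq_single i]
    · intro j _ hji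
      rw [horth i j (Ne.symm hji), mul_zero]
    · simp
  have hdot : h ⬝ᵥ h = ∑ i, (c i)^2 * (F i ⬝ᵥ F i) := by
    conv_lhs => rw [hh]
    rw [sum_dot]
    apply Finset.sum_congr rfl
    intro i _
    rw [← hh, hFdot i]
    ring
  have hAvh : A *ᵥ h = ∑ j, c j • (A *ᵥ F j) := by
    rw [hh, ← Matrix.mulVecLin_apply, map_sum]
    simp only [_root_.map_smul, Matrix.mulVecLin_apply]
  have hAF : ∀ i : Fin m, F i ⬝ᵥ (A *ᵥ h) = c i * (F i ⬝ᵥ (A *ᵥ F i)) := by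
    intro i
    rw [hAvh, dot_sum_right, Finset.sum_eq_single i]
    · intro j _ hji
      rw [hAorth i j (Ne.symm hji), mul_zero]
    · simp
  have hdotA : h ⬝ᵥ (A *ᵥ h) = ∑ i, (c i)^2 * (F i ⬝ᵥ (A *ᵥ F i)) := by
    conv_lhs => rw [hh]
    rw [sum_dot]
    apply Finset.sum_congr rfl
    intro i _
    rw [show (∑ i, c i • F i) = h from rfl, hAF i]
    ring
  have hpos' : 0 < h ⬝ᵥ h := by
    rw [hdot]
    obtain ⟨i0, hi0⟩ := Function.ne_iff.mp hcne
    have hi0' : c i0 ≠ 0 := by simpa using hi0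
    apply Finset.sum_pos' (fun i _ => mul_nonneg (sq_nonneg _) (hpos i).le)
    refine ⟨i0, Finset.mem_univ _, mul_pos ?_ (hpos i0)⟩
    exact lt_of_le_of_ne (sq_nonneg _) (Ne.symm (pow_ne_zero 2 hi0'))
  have hray' : α * (h ⬝ᵥ h) ≤ h ⬝ᵥ (A *ᵥ h) := by
    rw [hdot, hdotA, Finset.mul_sum]
    apply Finset.sum_le_sum
    intro i _
    rw [show α * ((c i)^2 * (F i ⬝ᵥ F i)) = (c i)^2 * (α * (F i ⬝ᵥ F i)) by ring]
    exact mul_le_mul_of_nonneg_left (hray i) (sq_nonneg _)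
  -- spectral decomposition
  set dco : Fin n → ℝ := fun j => ev j ⬝ᵥ h with hdco
  have hrepr : ∑ j, dco j • ev j = h := by
    have hsr := hA.eigenvectorBasis.sum_repr' (WithLp.toLp 2 h : EuclideanSpace ℝ (Fin n))
    have hco : ∀ j, (inner ℝ (hA.eigenvectorBasis j) (WithLp.toLp 2 h : EuclideanSpace ℝ (Fin n)) : ℝ) = dco j := by
      intro j
      rw [inner_eq_dot]
    rw [Finset.sum_congr rfl (fun j _ => by rw [hco j])] at hsr
    have hsr2 := congrArg WithLp.ofLp hsr
    simp only [WithLp.ofLp_sum, WithLp.ofLp_smul] at hsr2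
    rw [hev]; exact hsr2
  have hTzero : ∀ j ∈ T, dco j = 0 := by
    intro j hj
    have h1 : dco j = ∑ i, (ev j ⬝ᵥ F i) * c i := by
      rw [hdco]
      show ev j ⬝ᵥ h = _
      rw [hh, dot_sum_right]
      exact Finset.sum_congr rfl fun i _ => by ring
    have h2 : (M *ᵥ c) ⟨j, hj⟩ = ∑ i, (ev j ⬝ᵥ F i) * c i := rfl
    rw [h1, ← h2, hMc]
    rfl
  have hdec1 : h ⬝ᵥ h = ∑ j, dco j * dco j := by
    have e1 : (∑ j, dco j • ev j) ⬝ᵥ h = h ⬝ᵥ h := by rw [hrepr]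
    rw [← e1, sum_dot']
  have hdec2 : h ⬝ᵥ (A *ᵥ h) = ∑ j, hA.eigenvalues j * (dco j * dco j) := by
    have e1 : (∑ j, dco j • ev j) ⬝ᵥ (A *ᵥ h) = h ⬝ᵥ (A *ᵥ h) := by rw [hrepr]
    rw [← e1, sum_dot']
    apply Finset.sum_congr rfl
    intro j _
    have e2 : ev j ⬝ᵥ (A *ᵥ h) = hA.eigenvalues j * dco j := by
      rw [herm_symm_dot hA]
      have e3 : A *ᵥ ev j = hA.eigenvalues j • ev j := by
        rw [hev]
        exact hA.mulVec_eigenvectorBasis j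
      rw [e3, smul_dotProduct]
      rfl
    rw [e2]
    ring
  have hsub : Finset.univ \ T ⊆ Finset.univ := Finset.subset_univ _
  have hzero1 : ∀ j ∈ Finset.univ, j ∉ Finset.univ \ T → dco j * dco j = 0 := by
    intro j _ hj
    have : j ∈ T := by
      by_contra hc2
      exact hj (Finset.mem_sdiff.mpr ⟨Finset.mem_univ _, hc2⟩)
    rw [hTzero j this, mul_zero]
  have hzero2 : ∀ j ∈ Finset.univ, j ∉ Finset.univ \ T →
      hA.eigenvalues j * (dco j * dco j) = 0 := by
    intro j hj hj2
    rw [hzero1 j hj hj2, mul_zero]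
  have hsum1 : ∑ j ∈ Finset.univ \ T, dco j * dco j = h ⬝ᵥ h := by
    rw [hdec1]
    exact (Finset.sum_subset hsub hzero1)
  have hsum2 : ∑ j ∈ Finset.univ \ T, hA.eigenvalues j * (dco j * dco j) = h ⬝ᵥ (A *ᵥ h) := by
    rw [hdec2]
    exact (Finset.sum_subset hsub hzero2)
  have hwit : ∃ j ∈ Finset.univ \ T, dco j ≠ 0 := by
    by_contra hall
    push_neg at hall
    have : ∑ j ∈ Finset.univ \ T, dco j * dco j = 0 :=
      Finset.sum_eq_zero fun j hj => by rw [hall j hj, mul_zero]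
    rw [hsum1] at this
    exact hpos'.ne' this
  obtain ⟨j0, hj0mem, hj0⟩ := hwit
  have hstrict : ∑ j ∈ Finset.univ \ T, hA.eigenvalues j * (dco j * dco j)
      < ∑ j ∈ Finset.univ \ T, α * (dco j * dco j) := by
    apply Finset.sum_lt_sum
    · intro j hj
      have hjT : j ∉ T := (Finset.mem_sdiff.mp hj).2
      have : hA.eigenvalues j < α := by
        by_contra hc2
        push_neg at hc2
        exact hjT (by rw [hT]; exact Finset.mem_filter.mpr ⟨Finset.mem_univ _, hc2⟩)
      exact mul_le_mul_of_nonneg_right this.le (mul_self_nonneg _)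
    · refine ⟨j0, hj0mem, ?_⟩
      have hevlt : hA.eigenvalues j0 < α := by
        have hjT : j0 ∉ T := (Finset.mem_sdiff.mp hj0mem).2
        by_contra hc2
        push_neg at hc2
        exact hjT (by rw [hT]; exact Finset.mem_filter.mpr ⟨Finset.mem_univ _, hc2⟩)
      have : 0 < dco j0 * dco j0 := by
        rcases lt_or_gt_of_ne hj0 with hlt | hgt
        · exact mul_pos_of_neg_of_neg hlt hlt
        · exact mul_pos hgt hgt
      exact mul_lt_mul_of_pos_right hevlt this
  have hend : ∑ j ∈ Finset.univ \ T, α * (dco j * dco j) = α * (h ⬝ᵥ h) := by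
    rw [← Finset.mul_sum, hsum1]
  rw [hsum2, hend] at hstrict
  linarith

lemma count_le (hA : A.IsHermitian) (α : ℝ) (F : Fin m → Fin n → ℝ)
    (hpos : ∀ i, 0 < F i ⬝ᵥ F i)
    (horth : ∀ i j, i ≠ j → F i ⬝ᵥ F j = 0)
    (hAorth : ∀ i j, i ≠ j → F i ⬝ᵥ (A *ᵥ F j) = 0)
    (hray : ∀ i, F i ⬝ᵥ (A *ᵥ F i) ≤ α * (F i ⬝ᵥ F i)) :
    m ≤ (Finset.univ.filter (fun j => hA.eigenvalues j ≤ α)).card := by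
  by_contra hcard
  push_neg at hcard
  set T := Finset.univ.filter (fun j => hA.eigenvalues j ≤ α) with hT
  set ev : Fin n → Fin n → ℝ := fun j => ⇑(hA.eigenvectorBasis j) with hev
  set M : Matrix {j // j ∈ T} (Fin m) ℝ := Matrix.of (fun j i => ev j.1 ⬝ᵥ F i) with hM
  have hnotinj : ¬ Function.Injective M.mulVecLin := by
    intro hinj
    have hle := LinearMap.finrank_le_finrank_of_injective hinj
    rw [Module.finrank_fintype_fun_eq_card, Module.finrank_fintype_fun_eq_card,
      Fintype.card_fin, Fintype.card_coe] at hle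
    omega
  rw [Function.not_injective_iff] at hnotinj
  obtain ⟨c1, c2, heq, hne⟩ := hnotinj
  set c : Fin m → ℝ := c1 - c2 with hc
  have hcne : c ≠ 0 := sub_ne_zero.mpr hne
  have hMc : M *ᵥ c = 0 := by
    have : M.mulVecLin c = 0 := by
      rw [hc, map_sub, heq, sub_self]
    simpa using this
  set h : Fin n → ℝ := ∑ i, c i • F i with hh
  have hFdot : ∀ i : Fin m, F i ⬝ᵥ h = c i * (F i ⬝ᵥ F i) := by
    intro i
    rw [hh, dot_sum_right, Finset.sum_eq_single i]
    · intro j _ hji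
      rw [horth i j (Ne.symm hji), mul_zero]
    · simp
  have hdot : h ⬝ᵥ h = ∑ i, (c i)^2 * (F i ⬝ᵥ F i) := by
    conv_lhs => rw [hh]
    rw [sum_dot]
    apply Finset.sum_congr rfl
    intro i _
    rw [← hh, hFdot i]
    ring
  have hAvh : A *ᵥ h = ∑ j, c j • (A *ᵥ F j) := by
    rw [hh, ← Matrix.mulVecLin_apply, map_sum]
    simp only [_root_.map_smul, Matrix.mulVecLin_apply]
  have hAF : ∀ i : Fin m, F i ⬝ᵥ (A *ᵥ h) = c i * (F i ⬝ᵥ (A *ᵥ F i)) := by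
    intro i
    rw [hAvh, dot_sum_right, Finset.sum_eq_single i]
    · intro j _ hji
      rw [hAorth i j (Ne.symm hji), mul_zero]
    · simp
  have hdotA : h ⬝ᵥ (A *ᵥ h) = ∑ i, (c i)^2 * (F i ⬝ᵥ (A *ᵥ F i)) := by
    conv_lhs => rw [hh]
    rw [sum_dot]
    apply Finset.sum_congr rfl
    intro i _
    rw [show (∑ i, c i • F i) = h from rfl, hAF i]
    ring
  have hpos' : 0 < h ⬝ᵥ h := by
    rw [hdot]
    obtain ⟨i0, hi0⟩ := Function.ne_iff.mp hcne
    have hi0' : c i0 ≠ 0 := by simpa using hi0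
    apply Finset.sum_pos' (fun i _ => mul_nonneg (sq_nonneg _) (hpos i).le)
    refine ⟨i0, Finset.mem_univ _, mul_pos ?_ (hpos i0)⟩
    exact lt_of_le_of_ne (sq_nonneg _) (Ne.symm (pow_ne_zero 2 hi0'))
  have hray' : h ⬝ᵥ (A *ᵥ h) ≤ α * (h ⬝ᵥ h) := by
    rw [hdot, hdotA, Finset.mul_sum]
    apply Finset.sum_le_sum
    intro i _
    rw [show α * ((c i)^2 * (F i ⬝ᵥ F i)) = (c i)^2 * (α * (F i ⬝ᵥ F i)) by ring]
    exact mul_le_mul_of_nonneg_left (hray i) (sq_nonneg _)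
  -- spectral decomposition
  set dco : Fin n → ℝ := fun j => ev j ⬝ᵥ h with hdco
  have hrepr : ∑ j, dco j • ev j = h := by
    have hsr := hA.eigenvectorBasis.sum_repr' (WithLp.toLp 2 h : EuclideanSpace ℝ (Fin n))
    have hco : ∀ j, (inner ℝ (hA.eigenvectorBasis j) (WithLp.toLp 2 h : EuclideanSpace ℝ (Fin n)) : ℝ) = dco j := by
      intro j
      rw [inner_eq_dot]
    rw [Finset.sum_congr rfl (fun j _ => by rw [hco j])] at hsr
    have hsr2 := congrArg WithLp.ofLp hsr
    simp only [WithLp.ofLp_sum, WithLp.ofLp_smul] at hsr2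
    rw [hev]; exact hsr2
  have hTzero : ∀ j ∈ T, dco j = 0 := by
    intro j hj
    have h1 : dco j = ∑ i, (ev j ⬝ᵥ F i) * c i := by
      rw [hdco]
      show ev j ⬝ᵥ h = _
      rw [hh, dot_sum_right]
      exact Finset.sum_congr rfl fun i _ => by ring
    have h2 : (M *ᵥ c) ⟨j, hj⟩ = ∑ i, (ev j ⬝ᵥ F i) * c i := rfl
    rw [h1, ← h2, hMc]
    rfl
  have hdec1 : h ⬝ᵥ h = ∑ j, dco j * dco j := by
    have e1 : (∑ j, dco j • ev j) ⬝ᵥ h = h ⬝ᵥ h := by rw [hrepr]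
    rw [← e1, sum_dot']
  have hdec2 : h ⬝ᵥ (A *ᵥ h) = ∑ j, hA.eigenvalues j * (dco j * dco j) := by
    have e1 : (∑ j, dco j • ev j) ⬝ᵥ (A *ᵥ h) = h ⬝ᵥ (A *ᵥ h) := by rw [hrepr]
    rw [← e1, sum_dot']
    apply Finset.sum_congr rfl
    intro j _
    have e2 : ev j ⬝ᵥ (A *ᵥ h) = hA.eigenvalues j * dco j := by
      rw [herm_symm_dot hA]
      have e3 : A *ᵥ ev j = hA.eigenvalues j • ev j := by
        rw [hev]
        exact hA.mulVec_eigenvectorBasis j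
      rw [e3, smul_dotProduct]
      rfl
    rw [e2]
    ring
  have hsub : Finset.univ \ T ⊆ Finset.univ := Finset.subset_univ _
  have hzero1 : ∀ j ∈ Finset.univ, j ∉ Finset.univ \ T → dco j * dco j = 0 := by
    intro j _ hj
    have : j ∈ T := by
      by_contra hc2
      exact hj (Finset.mem_sdiff.mpr ⟨Finset.mem_univ _, hc2⟩)
    rw [hTzero j this, mul_zero]
  have hzero2 : ∀ j ∈ Finset.univ, j ∉ Finset.univ \ T →
      hA.eigenvalues j * (dco j * dco j) = 0 := by
    intro j hj hj2
    rw [hzero1 j hj hj2, mul_zero]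
  have hsum1 : ∑ j ∈ Finset.univ \ T, dco j * dco j = h ⬝ᵥ h := by
    rw [hdec1]
    exact (Finset.sum_subset hsub hzero1)
  have hsum2 : ∑ j ∈ Finset.univ \ T, hA.eigenvalues j * (dco j * dco j) = h ⬝ᵥ (A *ᵥ h) := by
    rw [hdec2]
    exact (Finset.sum_subset hsub hzero2)
  have hwit : ∃ j ∈ Finset.univ \ T, dco j ≠ 0 := by
    by_contra hall
    push_neg at hall
    have : ∑ j ∈ Finset.univ \ T, dco j * dco j = 0 :=
      Finset.sum_eq_zero fun j hj => by rw [hall j hj, mul_zero]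
    rw [hsum1] at this
    exact hpos'.ne' this
  obtain ⟨j0, hj0mem, hj0⟩ := hwit
  have hstrict : ∑ j ∈ Finset.univ \ T, α * (dco j * dco j)
      < ∑ j ∈ Finset.univ \ T, hA.eigenvalues j * (dco j * dco j) := by
    apply Finset.sum_lt_sum
    · intro j hj
      have hjT : j ∉ T := (Finset.mem_sdiff.mp hj).2
      have : α < hA.eigenvalues j := by
        by_contra hc2
        push_neg at hc2
        exact hjT (by rw [hT]; exact Finset.mem_filter.mpr ⟨Finset.mem_univ _, hc2⟩)
      exact mul_le_mul_of_nonneg_right this.le (mul_self_nonneg _)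
    · refine ⟨j0, hj0mem, ?_⟩
      have hevlt : α < hA.eigenvalues j0 := by
        have hjT : j0 ∉ T := (Finset.mem_sdiff.mp hj0mem).2
        by_contra hc2
        push_neg at hc2
        exact hjT (by rw [hT]; exact Finset.mem_filter.mpr ⟨Finset.mem_univ _, hc2⟩)
      have : 0 < dco j0 * dco j0 := by
        rcases lt_or_gt_of_ne hj0 with hlt | hgt
        · exact mul_pos_of_neg_of_neg hlt hlt
        · exact mul_pos hgt hgt
      exact mul_lt_mul_of_pos_right hevlt this
  have hend : ∑ j ∈ Finset.univ \ T, α * (dco j * dco j) = α * (h ⬝ᵥ h) := by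
    rw [← Finset.mul_sum, hsum1]
  rw [hsum2, hend] at hstrict
  linarith


lemma card_perm_filter (g : Fin n → ℝ) (P : ℝ → Prop) (σ : Equiv.Perm (Fin n)) :
    (Finset.univ.filter (fun j => P (g (σ j)))).card
      = (Finset.univ.filter (fun j => P (g j))).card := by
  apply Finset.card_bij (fun j _ => σ j)
  · intro j hj
    simp only [Finset.mem_filter, Finset.mem_univ, true_and] at hj ⊢
    exact hj
  · intro j1 _ j2 _ hj
    exact σ.injective hj
  · intro j' hj'
    refine ⟨σ.symm j', ?_, by simp⟩
    simp only [Finset.mem_filter, Finset.mem_univ, true_and, Equiv.apply_symm_apply] at hj' ⊢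
    exact hj'

lemma sorted_ge (hA : A.IsHermitian) {α : ℝ} {m : ℕ} (hm : 1 ≤ m) (hmn : m ≤ n)
    (hcount : m ≤ (Finset.univ.filter (fun j => α ≤ hA.eigenvalues j)).card) :
    α ≤ sortedEigs A ⟨n - m, by omega⟩ := by
  unfold sortedEigs
  rw [dif_pos hA]
  set σ := Tuple.sort hA.eigenvalues with hσ
  have hmono : Monotone (hA.eigenvalues ∘ σ) := Tuple.monotone_sort hA.eigenvalues
  by_contra hlt
  push_neg at hlt
  have hsub : Finset.univ.filter (fun j => α ≤ hA.eigenvalues (σ j))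
      ⊆ Finset.Ioi (⟨n - m, by omega⟩ : Fin n) := by
    intro j hj
    simp only [Finset.mem_filter, Finset.mem_univ, true_and] at hj
    rw [Finset.mem_Ioi]
    by_contra hle
    push_neg at hle
    have := hmono hle
    simp only [Function.comp_apply] at this
    exact absurd (le_trans hj this) (not_le.mpr hlt)
  have hcard2 := Finset.card_le_card hsub
  rw [card_perm_filter hA.eigenvalues (fun z => α ≤ z) σ] at hcard2
  rw [Fin.card_Ioi] at hcard2
  simp only at hcard2
  omega

lemma sorted_le (hA : A.IsHermitian) {α : ℝ} {m : ℕ} (hm : 1 ≤ m) (hmn : m ≤ n)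
    (hcount : m ≤ (Finset.univ.filter (fun j => hA.eigenvalues j ≤ α)).card) :
    sortedEigs A ⟨m - 1, by omega⟩ ≤ α := by
  unfold sortedEigs
  rw [dif_pos hA]
  set σ := Tuple.sort hA.eigenvalues with hσ
  have hmono : Monotone (hA.eigenvalues ∘ σ) := Tuple.monotone_sort hA.eigenvalues
  by_contra hlt
  push_neg at hlt
  have hsub : Finset.univ.filter (fun j => hA.eigenvalues (σ j) ≤ α)
      ⊆ Finset.Iio (⟨m - 1, by omega⟩ : Fin n) := by
    intro j hj
    simp only [Finset.mem_filter, Finset.mem_univ, true_and] at hj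
    rw [Finset.mem_Iio]
    by_contra hle
    push_neg at hle
    have := hmono hle
    simp only [Function.comp_apply] at this
    exact absurd (le_trans this hj) (not_le.mpr hlt)
  have hcard2 := Finset.card_le_card hsub
  rw [card_perm_filter hA.eigenvalues (fun z => z ≤ α) σ] at hcard2
  rw [Fin.card_Iio] at hcard2
  simp only at hcard2
  omega

lemma pigeon {N s : ℕ} (hN : N = 2*s + 1) (x : Fin N → ℝ) :
    s + 1 ≤ (Finset.univ.filter
      (fun i => s + 1 ≤ (Finset.univ.filter (fun j => x i ≤ x j)).card)).card := by
  by_contra hcon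
  push_neg at hcon
  set S := Finset.univ.filter
      (fun i => s + 1 ≤ (Finset.univ.filter (fun j => x i ≤ x j)).card) with hS
  set C := Finset.univ \ S with hC
  have hCcard : s + 1 ≤ C.card := by
    have h1 : C.card = N - S.card := by
      rw [hC, Finset.card_sdiff_of_subset (Finset.subset_univ _), Finset.card_univ, Fintype.card_fin]
    omega
  have hCne : C.Nonempty := Finset.card_pos.mp (by omega)
  obtain ⟨i0, hi0C, hi0min⟩ := Finset.exists_min_image C x hCne
  have hsubset : C ⊆ Finset.univ.filter (fun j => x i0 ≤ x j) := by
    intro j hj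
    exact Finset.mem_filter.mpr ⟨Finset.mem_univ _, hi0min j hj⟩
  have : s + 1 ≤ (Finset.univ.filter (fun j => x i0 ≤ x j)).card :=
    le_trans hCcard (Finset.card_le_card hsubset)
  have hi0S : i0 ∈ S := Finset.mem_filter.mpr ⟨Finset.mem_univ _, this⟩
  have := (Finset.mem_sdiff.mp hi0C).2
  exact this hi0S

end spectral


/-- Let `s, k ≥ 1`, `d ≥ 5`, and let `G` be an `n`-vertex `d`-regular
graph containing `2s+1` distinct vertices whose pairwise distances (in `ℕ∞`) are all at
least `4k`. Then `(√(d-1)+2)·μ_{s+1}(G) − (√(d-1)-2)·μ_{n-s+1}(G) ≥ 4(d-1)·cos(π/(2k))`. -/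
theorem stmt12 {n : ℕ} (s k d : ℕ) (hs : 1 ≤ s) (hk : 1 ≤ k) (hd : 5 ≤ d)
    (G : SimpleGraph (Fin n)) (hreg : G.IsRegularOfDegree d)
    (v : Fin (2 * s + 1) → Fin n) (hinj : Function.Injective v)
    (hdist : ∀ i j, i ≠ j → ((4 * k : ℕ) : ℕ∞) ≤ G.edist (v i) (v j)) :
    (Real.sqrt ((d : ℝ) - 1) + 2) * adjEig G (s + 1) -
        (Real.sqrt ((d : ℝ) - 1) - 2) * adjEig G (n - s + 1) ≥
      4 * ((d : ℝ) - 1) * Real.cos (Real.pi / (2 * k)) := by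
  have hn : 2 * s + 1 ≤ n := by
    have := Fintype.card_le_of_injective v hinj
    simpa using this
  have hA : (G.adjMatrix ℝ).IsHermitian := by
    show (G.adjMatrix ℝ)ᴴ = G.adjMatrix ℝ
    ext i j
    simp [Matrix.conjTranspose_apply, SimpleGraph.adjMatrix_apply, SimpleGraph.adj_comm]
  set F : Fin (2*s+1) → Fin n → ℝ := fun i => FFb G k d (v i) with hF
  set Gg : Fin (2*s+1) → Fin n → ℝ := fun i => GGb G k d (v i) with hGg
  -- norms agree and are positive
  have hGgF : ∀ i x, Gg i x * Gg i x = F i x * F i x := by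
    intro i x
    show GGb G k d (v i) x * GGb G k d (v i) x = FFb G k d (v i) x * FFb G k d (v i) x
    unfold GGb
    rw [show ((-1:ℝ)^(G.edist (v i) x).toNat * FFb G k d (v i) x)
          * ((-1:ℝ)^(G.edist (v i) x).toNat * FFb G k d (v i) x)
        = ((-1:ℝ)^(G.edist (v i) x).toNat * (-1:ℝ)^(G.edist (v i) x).toNat)
          * (FFb G k d (v i) x * FFb G k d (v i) x) from by ring,
      ← pow_add, Even.neg_one_pow ⟨_, rfl⟩, one_mul]
  have hMnGg : ∀ i, Gg i ⬝ᵥ Gg i = F i ⬝ᵥ F i := by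
    intro i
    unfold dotProduct
    exact Finset.sum_congr rfl fun x _ => hGgF i x
  have hMpos : ∀ i, 0 < F i ⬝ᵥ F i := by
    intro i
    unfold dotProduct
    apply Finset.sum_pos' (fun x _ => mul_self_nonneg _)
    refine ⟨v i, Finset.mem_univ _, ?_⟩
    have hva : F i (v i) = vseq k d 0 := by
      show FFb G k d (v i) (v i) = vseq k d 0
      exact FFb_eq hk (t := 0) (by omega) (by rw [SimpleGraph.edist_self]; rfl)
    rw [hva]
    have h0 := vseq_pos hk hd (k := k) (t := 0) (by omega)
    nlinarith
  -- orthogonality relations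
  have hzero : ∀ i j, i ≠ j → ∀ x y : Fin n, G.edist x y ≤ 1 → F i x * F j y = 0 := by
    intro i j hij x y hxy
    exact far_mul_zero hk (hdist i j hij) hxy
  have hzeroG : ∀ i j, i ≠ j → ∀ x y : Fin n, G.edist x y ≤ 1 → Gg i x * Gg j y = 0 := by
    intro i j hij x y hxy
    show GGb G k d (v i) x * GGb G k d (v j) y = 0
    unfold GGb
    rw [show ((-1:ℝ)^(G.edist (v i) x).toNat * FFb G k d (v i) x)
          * ((-1:ℝ)^(G.edist (v j) y).toNat * FFb G k d (v j) y)
        = ((-1:ℝ)^(G.edist (v i) x).toNat * (-1:ℝ)^(G.edist (v j) y).toNat)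
          * (FFb G k d (v i) x * FFb G k d (v j) y) from by ring]
    rw [show FFb G k d (v i) x * FFb G k d (v j) y = F i x * F j y from rfl,
      hzero i j hij x y hxy, mul_zero]
  have horthF : ∀ i j, i ≠ j → F i ⬝ᵥ F j = 0 := by
    intro i j hij
    unfold dotProduct
    apply Finset.sum_eq_zero
    intro x _
    exact hzero i j hij x x (by rw [SimpleGraph.edist_self]; exact zero_le_one)
  have horthG : ∀ i j, i ≠ j → Gg i ⬝ᵥ Gg j = 0 := by
    intro i j hij
    unfold dotProduct
    apply Finset.sum_eq_zero
    intro x _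
    exact hzeroG i j hij x x (by rw [SimpleGraph.edist_self]; exact zero_le_one)
  have hAorthF : ∀ i j, i ≠ j → F i ⬝ᵥ (G.adjMatrix ℝ *ᵥ F j) = 0 := by
    intro i j hij
    unfold dotProduct
    apply Finset.sum_eq_zero
    intro x _
    rw [SimpleGraph.adjMatrix_mulVec_apply, Finset.mul_sum]
    apply Finset.sum_eq_zero
    intro y hy
    exact hzero i j hij x y
      (le_of_eq ((edist_eq_one_iff_adj).mpr ((SimpleGraph.mem_neighborFinset _ _ _).mp hy)))
  have hAorthG : ∀ i j, i ≠ j → Gg i ⬝ᵥ (G.adjMatrix ℝ *ᵥ Gg j) = 0 := by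
    intro i j hij
    unfold dotProduct
    apply Finset.sum_eq_zero
    intro x _
    rw [SimpleGraph.adjMatrix_mulVec_apply, Finset.mul_sum]
    apply Finset.sum_eq_zero
    intro y hy
    exact hzeroG i j hij x y
      (le_of_eq ((edist_eq_one_iff_adj).mpr ((SimpleGraph.mem_neighborFinset _ _ _).mp hy)))
  -- per-ball inequality
  have hball : ∀ i, 4 * ((d:ℝ)-1) * Real.cos (thK k) * (F i ⬝ᵥ F i)
      ≤ (Real.sqrt ((d:ℝ)-1) + 2) * (F i ⬝ᵥ (G.adjMatrix ℝ *ᵥ F i))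
        - (Real.sqrt ((d:ℝ)-1) - 2) * (Gg i ⬝ᵥ (G.adjMatrix ℝ *ᵥ Gg i)) := by
    intro i
    exact perball hk hd hreg
  -- Rayleigh quotients
  set xr : Fin (2*s+1) → ℝ :=
    fun i => (F i ⬝ᵥ (G.adjMatrix ℝ *ᵥ F i)) / (F i ⬝ᵥ F i) with hxr
  set yr : Fin (2*s+1) → ℝ :=
    fun i => (Gg i ⬝ᵥ (G.adjMatrix ℝ *ᵥ Gg i)) / (F i ⬝ᵥ F i) with hyr
  -- pigeonhole
  set SA := Finset.univ.filter
    (fun i => s + 1 ≤ (Finset.univ.filter (fun j => xr i ≤ xr j)).card) with hSA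
  set SB := Finset.univ.filter
    (fun i => s + 1 ≤ (Finset.univ.filter (fun j => yr j ≤ yr i)).card) with hSB
  have hSAcard : s + 1 ≤ SA.card := pigeon rfl xr
  have hSBcard : s + 1 ≤ SB.card := by
    have hp := pigeon rfl (fun i => - yr i)
    have hfilt : ∀ i : Fin (2*s+1), (Finset.univ.filter (fun j => - yr i ≤ - yr j))
        = Finset.univ.filter (fun j => yr j ≤ yr i) := by
      intro i
      apply Finset.filter_congr
      intro j _
      simp
    rw [hSB]
    calc s + 1 ≤ (Finset.univ.filter
        (fun i => s + 1 ≤ (Finset.univ.filter (fun j => - yr i ≤ - yr j)).card)).card := hp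
      _ = _ := by
        apply congrArg
        apply Finset.filter_congr
        intro i _
        rw [hfilt i]
  have hinter : (SA ∩ SB).Nonempty := by
    rw [← Finset.card_pos]
    have h1 := Finset.card_union_add_card_inter SA SB
    have h2 : (SA ∪ SB).card ≤ 2*s+1 := by
      have := Finset.card_le_card (Finset.subset_univ (SA ∪ SB))
      simpa using this
    omega
  obtain ⟨i₀, hi₀⟩ := hinter
  have hi₀A : s + 1 ≤ (Finset.univ.filter (fun j => xr i₀ ≤ xr j)).card := by
    have := (Finset.mem_inter.mp hi₀).1
    rw [hSA] at this
    exact (Finset.mem_filter.mp this).2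
  have hi₀B : s + 1 ≤ (Finset.univ.filter (fun j => yr j ≤ yr i₀)).card := by
    have := (Finset.mem_inter.mp hi₀).2
    rw [hSB] at this
    exact (Finset.mem_filter.mp this).2
  -- upper eigenvalue bound : adjEig G (s+1) ≥ xr i₀
  have hcount1 : s + 1 ≤ (Finset.univ.filter (fun j => xr i₀ ≤ hA.eigenvalues j)).card := by
    obtain ⟨S', hS'sub, hS'card⟩ := Finset.exists_subset_card_eq hi₀A
    set emb : Fin (s+1) → Fin (2*s+1) := fun t => ((S'.orderIsoOfFin hS'card) t).1 with hemb
    have hembinj : Function.Injective emb := by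
      intro a b hab
      exact (S'.orderIsoOfFin hS'card).injective (Subtype.ext hab)
    have hembmem : ∀ t, xr i₀ ≤ xr (emb t) := by
      intro t
      have := hS'sub ((S'.orderIsoOfFin hS'card) t).2
      exact (Finset.mem_filter.mp this).2
    apply count_ge hA (xr i₀) (fun t => F (emb t))
    · intro t; exact hMpos _
    · intro a b hab; exact horthF _ _ (fun hc => hab (hembinj hc))
    · intro a b hab; exact hAorthF _ _ (fun hc => hab (hembinj hc))
    · intro t
      have h2 := hMpos (emb t)
      rw [← le_div_iff₀ h2]
      exact hembmem t
  have hup : xr i₀ ≤ adjEig G (s+1) := by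
    have hlt : n - (s+1) < n := by omega
    have := sorted_ge hA (m := s+1) (by omega) (by omega) hcount1
    unfold adjEig
    rw [dif_pos hlt]
    exact this
  -- lower eigenvalue bound : adjEig G (n-s+1) ≤ yr i₀
  have hcount2 : s ≤ (Finset.univ.filter (fun j => hA.eigenvalues j ≤ yr i₀)).card := by
    obtain ⟨S', hS'sub, hS'card⟩ := Finset.exists_subset_card_eq
      (le_trans (by omega : s ≤ s + 1) hi₀B)
    set emb : Fin s → Fin (2*s+1) := fun t => ((S'.orderIsoOfFin hS'card) t).1 with hemb
    have hembinj : Function.Injective emb := by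
      intro a b hab
      exact (S'.orderIsoOfFin hS'card).injective (Subtype.ext hab)
    have hembmem : ∀ t, yr (emb t) ≤ yr i₀ := by
      intro t
      have := hS'sub ((S'.orderIsoOfFin hS'card) t).2
      exact (Finset.mem_filter.mp this).2
    apply count_le hA (yr i₀) (fun t => Gg (emb t))
    · intro t; rw [hMnGg]; exact hMpos _
    · intro a b hab; exact horthG _ _ (fun hc => hab (hembinj hc))
    · intro a b hab; exact hAorthG _ _ (fun hc => hab (hembinj hc))
    · intro t
      have h1 := hembmem t
      have h2 := hMpos (emb t)
      rw [hyr] at h1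
      simp only at h1
      rw [div_le_iff₀ h2] at h1
      rw [hMnGg]
      exact h1
  have hdown : adjEig G (n-s+1) ≤ yr i₀ := by
    have hidx : n - (n - s + 1) = s - 1 := by omega
    have hlt : n - (n - s + 1) < n := by omega
    unfold adjEig
    rw [dif_pos hlt]
    have := sorted_le hA (m := s) (by omega) (by omega) hcount2
    have hfin : (⟨n - (n - s + 1), hlt⟩ : Fin n) = ⟨s - 1, by omega⟩ := by
      exact Fin.ext hidx
    rw [hfin]
    exact this
  -- final combination
  have hlam2 := lam_ge2 hd
  have hMp := hMpos i₀
  have hb := hball i₀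
  have hxy : (Real.sqrt ((d:ℝ)-1) + 2) * xr i₀ - (Real.sqrt ((d:ℝ)-1) - 2) * yr i₀
      ≥ 4 * ((d:ℝ)-1) * Real.cos (thK k) := by
    rw [hxr, hyr]
    simp only
    rw [ge_iff_le]
    have heq : (Real.sqrt ((d:ℝ)-1) + 2) * ((F i₀ ⬝ᵥ (G.adjMatrix ℝ *ᵥ F i₀)) / (F i₀ ⬝ᵥ F i₀))
        - (Real.sqrt ((d:ℝ)-1) - 2) * ((Gg i₀ ⬝ᵥ (G.adjMatrix ℝ *ᵥ Gg i₀)) / (F i₀ ⬝ᵥ F i₀))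
      = ((Real.sqrt ((d:ℝ)-1) + 2) * (F i₀ ⬝ᵥ (G.adjMatrix ℝ *ᵥ F i₀))
        - (Real.sqrt ((d:ℝ)-1) - 2) * (Gg i₀ ⬝ᵥ (G.adjMatrix ℝ *ᵥ Gg i₀))) / (F i₀ ⬝ᵥ F i₀) := by
      field_simp
    rw [heq, le_div_iff₀ hMp]
    linarith [hb]
  have hth : Real.pi / (2 * (k:ℝ)) = thK k := rfl
  rw [ge_iff_le, hth]
  have hpp : (0:ℝ) ≤ Real.sqrt ((d:ℝ)-1) + 2 := by linarith
  have hqq : (0:ℝ) ≤ Real.sqrt ((d:ℝ)-1) - 2 := by linarith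
  have h1 : (Real.sqrt ((d:ℝ)-1) + 2) * xr i₀ ≤ (Real.sqrt ((d:ℝ)-1) + 2) * adjEig G (s+1) :=
    mul_le_mul_of_nonneg_left hup hpp
  have h2 : (Real.sqrt ((d:ℝ)-1) - 2) * adjEig G (n-s+1) ≤ (Real.sqrt ((d:ℝ)-1) - 2) * yr i₀ :=
    mul_le_mul_of_nonneg_left hdown hqq
  linarith [hxy]
end

section
/- Let d ≥ 3 and k ≥ 1 be integers and let G be an n-vertex d-regular graph. Then there exists a set ℰ of edges of G that are pairwise at distance at least 2k + 2 from one another with |ℰ| ≥ n(d−2)·(d−1)^{−(2k+2)}/(4d). -/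
open SimpleGraph Finset

attribute [local instance] Classical.propDecidable

/-- The distance (in `ℕ∞`) between two edges `e, f` of `G`: the minimum of `edist u v`
over endpoints `u ∈ e`, `v ∈ f`. -/
noncomputable def edgeDist {V : Type*} (G : SimpleGraph V) (e f : Sym2 V) : ℕ∞ :=
  ⨅ (u ∈ e) (v ∈ f), G.edist u v

lemma edgeDist_le_of_mem {V : Type*} {G : SimpleGraph V} {e f : Sym2 V} {u v : V}
    (hu : u ∈ e) (hv : v ∈ f) : edgeDist G e f ≤ G.edist u v := by
  unfold edgeDist
  exact iInf₂_le_of_le u hu (iInf₂_le v hv)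

lemma le_edgeDist {V : Type*} {G : SimpleGraph V} {e f : Sym2 V} {c : ℕ∞}
    (h : ∀ u ∈ e, ∀ v ∈ f, c ≤ G.edist u v) : c ≤ edgeDist G e f :=
  le_iInf₂ fun u hu => le_iInf₂ fun v hv => h u hu v hv

lemma edgeDist_comm {V : Type*} (G : SimpleGraph V) (e f : Sym2 V) :
    edgeDist G e f = edgeDist G f e := by
  have key : ∀ e f : Sym2 V, edgeDist G e f ≤ edgeDist G f e := by
    intro e f
    refine le_edgeDist fun u hu v hv => ?_
    rw [edist_comm]
    exact edgeDist_le_of_mem hv hu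
  exact le_antisymm (key e f) (key f e)

lemma edgeDist_mk_mk {V : Type*} (G : SimpleGraph V) (a b c d : V) :
    edgeDist G s(a, b) s(c, d) =
      (G.edist a c ⊓ G.edist a d) ⊓ (G.edist b c ⊓ G.edist b d) := by
  refine le_antisymm ?_ ?_
  · refine le_inf (le_inf ?_ ?_) (le_inf ?_ ?_) <;>
      exact edgeDist_le_of_mem (by simp) (by simp)
  · refine le_edgeDist fun u hu v hv => ?_
    rw [Sym2.mem_iff] at hu hv
    rcases hu with rfl | rfl <;> rcases hv with rfl | rfl
    · exact inf_le_of_left_le inf_le_left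
    · exact inf_le_of_left_le inf_le_right
    · exact inf_le_of_right_le inf_le_left
    · exact inf_le_of_right_le inf_le_right

lemma exists_adj_edist {V : Type*} {G : SimpleGraph V} {a v : V} {i : ℕ}
    (h : G.edist a v = (i : ℕ∞) + 1) : ∃ u, G.Adj u v ∧ G.edist a u = i := by
  have hne : v ≠ a := by
    rintro rfl
    rw [edist_self] at h
    exact absurd h.symm (by exact_mod_cast Nat.succ_ne_zero i)
  have h' : G.edist a v = ((i + 1 : ℕ) : ℕ∞) := by rw [h]; push_cast; ring
  obtain ⟨p, hp⟩ := exists_walk_of_edist_eq_coe h'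
  obtain ⟨u, hadj, q, hq⟩ := Walk.exists_eq_cons_of_ne hne p.reverse
  have hql : q.length = i := by
    have : p.reverse.length = i + 1 := by rw [Walk.length_reverse, hp]
    rw [hq] at this
    simpa using this
  refine ⟨u, hadj.symm, le_antisymm ?_ ?_⟩
  · have := edist_le (G := G) q.reverse
    rwa [Walk.length_reverse, hql] at this
  · have htri := G.edist_triangle (u := a) (v := u) (w := v)
    have huv : G.edist u v ≤ 1 := by
      have := edist_le (G := G) hadj.symm.toWalk
      simpa using this
    have : (i : ℕ∞) + 1 ≤ G.edist a u + 1 := by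
      calc (i : ℕ∞) + 1 = G.edist a v := h.symm
        _ ≤ G.edist a u + G.edist u v := htri
        _ ≤ G.edist a u + 1 := add_le_add le_rfl huv
    exact (WithTop.add_le_add_iff_right (by simp : (1 : ℕ∞) ≠ ⊤)).mp this

section Spheres

variable {V : Type*} [Fintype V] (G : SimpleGraph V)

noncomputable def sph (a : V) (i : ℕ) : Finset V :=
  Finset.univ.filter fun v => G.edist a v = (i : ℕ∞)

noncomputable def ballF (a : V) (t : ℕ) : Finset V :=
  Finset.univ.filter fun v => G.edist a v ≤ (t : ℕ∞)

variable {G}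

lemma sph_zero (a : V) : sph G a 0 ⊆ {a} := by
  intro v hv
  simp only [sph, mem_filter, Nat.cast_zero, edist_eq_zero_iff] at hv
  simp [hv.2.symm]

lemma sph_one_subset (a : V) : sph G a 1 ⊆ G.neighborFinset a := by
  intro v hv
  simp only [sph, mem_filter, Nat.cast_one, edist_eq_one_iff_adj] at hv
  simpa using hv.2

lemma sph_step {d : ℕ} (hd : 1 ≤ d) (hreg : G.IsRegularOfDegree d) (a : V) (i : ℕ) :
    (sph G a (i + 2)).card ≤ (d - 1) * (sph G a (i + 1)).card := by
  classical
  have hsub : sph G a (i + 2) ⊆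
      (sph G a (i + 1)).biUnion fun u => G.neighborFinset u ∩ sph G a (i + 2) := by
    intro v hv
    have hv' : G.edist a v = ((i + 1 : ℕ) : ℕ∞) + 1 := by
      simp only [sph, mem_filter] at hv
      rw [hv.2]; push_cast; ring
    obtain ⟨u, hadj, hu⟩ := exists_adj_edist hv'
    simp only [mem_biUnion, mem_inter, mem_neighborFinset, sph, mem_filter]
    exact ⟨u, ⟨mem_univ _, hu⟩, hadj, mem_univ _, by
      simp only [sph, mem_filter] at hv; exact hv.2⟩
  calc (sph G a (i + 2)).card
      ≤ ((sph G a (i + 1)).biUnion fun u => G.neighborFinset u ∩ sph G a (i + 2)).card :=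
        card_le_card hsub
    _ ≤ ∑ u ∈ sph G a (i + 1), (G.neighborFinset u ∩ sph G a (i + 2)).card :=
        card_biUnion_le
    _ ≤ ∑ _u ∈ sph G a (i + 1), (d - 1) := by
        refine Finset.sum_le_sum fun u hu => ?_
        have hu' : G.edist a u = ((i : ℕ) : ℕ∞) + 1 := by
          simp only [sph, mem_filter] at hu
          rw [hu.2]; push_cast; ring
        obtain ⟨w, hadj, hw⟩ := exists_adj_edist hu'
        have hwmem : w ∈ G.neighborFinset u := by simpa using hadj.symm
        have hsub2 : G.neighborFinset u ∩ sph G a (i + 2) ⊆ (G.neighborFinset u).erase w := by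
          intro x hx
          simp only [mem_inter, sph, mem_filter] at hx
          refine mem_erase.mpr ⟨?_, hx.1⟩
          rintro rfl
          rw [hw] at hx
          have : (i : ℕ) = i + 2 := by exact_mod_cast hx.2.2
          omega
        calc (G.neighborFinset u ∩ sph G a (i + 2)).card
            ≤ ((G.neighborFinset u).erase w).card := card_le_card hsub2
          _ = d - 1 := by rw [card_erase_of_mem hwmem, card_neighborFinset_eq_degree, hreg u]
    _ = (d - 1) * (sph G a (i + 1)).card := by rw [sum_const, smul_eq_mul, mul_comm]

lemma sph_card_le {d : ℕ} (hd : 1 ≤ d) (hreg : G.IsRegularOfDegree d) (a : V) (i : ℕ) :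
    (sph G a (i + 1)).card ≤ d * (d - 1) ^ i := by
  induction i with
  | zero =>
    simpa using (card_le_card (sph_one_subset a)).trans
      (by rw [card_neighborFinset_eq_degree, hreg a])
  | succ i ih =>
    calc (sph G a (i + 2)).card ≤ (d - 1) * (sph G a (i + 1)).card := sph_step hd hreg a i
      _ ≤ (d - 1) * (d * (d - 1) ^ i) := Nat.mul_le_mul_left _ ih
      _ = d * (d - 1) ^ (i + 1) := by ring

lemma ballF_card_le {d : ℕ} (hd : 1 ≤ d) (hreg : G.IsRegularOfDegree d) (a : V) (t : ℕ) :
    (ballF G a t).card ≤ 1 + d * ∑ j ∈ Finset.range t, (d - 1) ^ j := by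
  classical
  have hsub : ballF G a t ⊆ (Finset.range (t + 1)).biUnion (sph G a) := by
    intro v hv
    simp only [ballF, mem_filter] at hv
    have hne : G.edist a v ≠ ⊤ := fun h => by simp [h] at hv
    lift G.edist a v to ℕ using hne with j hj
    have hjt : j ≤ t := by exact_mod_cast hv.2
    simp only [mem_biUnion, mem_range, sph, mem_filter]
    exact ⟨j, by omega, mem_univ _, hj.symm⟩
  calc (ballF G a t).card ≤ ∑ i ∈ Finset.range (t + 1), (sph G a i).card :=
        (card_le_card hsub).trans card_biUnion_le
    _ = (sph G a 0).card + ∑ i ∈ Finset.range t, (sph G a (i + 1)).card := by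
        rw [Finset.sum_range_succ']; ring
    _ ≤ 1 + ∑ i ∈ Finset.range t, d * (d - 1) ^ i := by
        refine Nat.add_le_add ?_ (Finset.sum_le_sum fun i _ => sph_card_le hd hreg a i)
        simpa using card_le_card (sph_zero a)
    _ = 1 + d * ∑ j ∈ Finset.range t, (d - 1) ^ j := by rw [Finset.mul_sum]

end Spheres

lemma near_card {V : Type*} [Fintype V] {G : SimpleGraph V} {d : ℕ} (hd : 1 ≤ d)
    (hreg : G.IsRegularOfDegree d) (f : Sym2 V) (r : ℕ) (A : Finset (Sym2 V))
    (hA : ∀ e ∈ A, e ∈ G.edgeSet ∧ edgeDist G f e ≤ (r : ℕ∞)) :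
    A.card ≤ 2 * (1 + d * ∑ j ∈ Finset.range r, (d - 1) ^ j) * d := by
  classical
  induction f using Sym2.ind with
  | _ a b =>
    have hsub : A ⊆
        (ballF G a r ∪ ballF G b r).biUnion (fun v => G.incidenceFinset v) := by
      intro e he
      obtain ⟨he1, he2⟩ := hA e he
      induction e using Sym2.ind with
      | _ c c' =>
        rw [edgeDist_mk_mk] at he2
        have hedge : s(c, c') ∈ G.edgeSet := he1
        simp only [inf_le_iff] at he2
        have goal : ∀ v, v ∈ ballF G a r ∪ ballF G b r → v ∈ s(c, c') →
            s(c, c') ∈ (ballF G a r ∪ ballF G b r).biUnion (fun v => G.incidenceFinset v) := by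
          intro v hv hve
          refine mem_biUnion.mpr ⟨v, hv, ?_⟩
          rw [mem_incidenceFinset]
          exact ⟨hedge, hve⟩
        rcases he2 with (h | h) | (h | h)
        · exact goal c (mem_union_left _ (by simp [ballF, h])) (by simp)
        · exact goal c' (mem_union_left _ (by simp [ballF, h])) (by simp)
        · exact goal c (mem_union_right _ (by simp [ballF, h])) (by simp)
        · exact goal c' (mem_union_right _ (by simp [ballF, h])) (by simp)
    refine ((card_le_card hsub).trans card_biUnion_le).trans ?_
    calc ∑ v ∈ ballF G a r ∪ ballF G b r, (G.incidenceFinset v).card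
        = ∑ _v ∈ ballF G a r ∪ ballF G b r, d := by
          refine Finset.sum_congr rfl fun v _ => ?_
          rw [card_incidenceFinset_eq_degree, hreg v]
      _ = (ballF G a r ∪ ballF G b r).card * d := by rw [sum_const, smul_eq_mul]
      _ ≤ ((ballF G a r).card + (ballF G b r).card) * d :=
          Nat.mul_le_mul_right _ (card_union_le _ _)
      _ ≤ ((1 + d * ∑ j ∈ Finset.range r, (d - 1) ^ j) +
            (1 + d * ∑ j ∈ Finset.range r, (d - 1) ^ j)) * d :=
          Nat.mul_le_mul_right _
            (Nat.add_le_add (ballF_card_le hd hreg a r) (ballF_card_le hd hreg b r))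
      _ = 2 * (1 + d * ∑ j ∈ Finset.range r, (d - 1) ^ j) * d := by ring

lemma geo_le (c : ℕ) : ∀ r : ℕ, c * ∑ j ∈ Finset.range r, (c + 1) ^ j ≤ (c + 1) ^ r := by
  intro r
  induction r with
  | zero => simp
  | succ r ih =>
    rw [Finset.sum_range_succ, Nat.mul_add, pow_succ]
    calc c * ∑ j ∈ Finset.range r, (c + 1) ^ j + c * (c + 1) ^ r
        ≤ (c + 1) ^ r + c * (c + 1) ^ r := Nat.add_le_add_right ih _
      _ = (c + 1) ^ r * (c + 1) := by ring

/-- Every `n`-vertex `d`-regular graph (`d ≥ 3`, `k ≥ 1`) contains a set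
`ℰ` of edges, pairwise at distance at least `2k+2`, with
`|ℰ| ≥ n(d-2)·(d-1)^{-(2k+2)}/(4d)`. -/
theorem stmt13 {n : ℕ} (d k : ℕ) (hd : 3 ≤ d) (hk : 1 ≤ k)
    (G : SimpleGraph (Fin n)) (hreg : G.IsRegularOfDegree d) :
    ∃ E : Finset (Sym2 (Fin n)), (↑E : Set (Sym2 (Fin n))) ⊆ G.edgeSet ∧
      (∀ e ∈ E, ∀ f ∈ E, e ≠ f → ((2 * k + 2 : ℕ) : ℕ∞) ≤ edgeDist G e f) ∧
      (n : ℝ) * ((d : ℝ) - 2) * ((d : ℝ) - 1) ^ (-((2 * k + 2 : ℕ) : ℝ)) / (4 * d) ≤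
        E.card := by
  classical
  have hd1 : 1 ≤ d := by omega
  set r : ℕ := 2 * k + 1 with hr
  set S : ℕ := ∑ j ∈ Finset.range r, (d - 1) ^ j with hS
  set B : ℕ := 2 * (1 + d * S) * d with hB
  set P : Finset (Sym2 (Fin n)) → Prop :=
    fun E => ∀ e ∈ E, ∀ f ∈ E, e ≠ f → ((2 * k + 2 : ℕ) : ℕ∞) ≤ edgeDist G e f with hP
  have hcand : (G.edgeFinset.powerset.filter P).Nonempty :=
    ⟨∅, by simp [hP]⟩
  obtain ⟨E, hEmem, hEmax⟩ : ∃ E ∈ G.edgeFinset.powerset.filter P,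
      ∀ x ∈ G.edgeFinset.powerset.filter P, ¬ E < x := by
    obtain ⟨E, hE⟩ := Finset.exists_maximal hcand
    exact ⟨E, hE.1, fun x hx hlt => absurd (hE.2 hx hlt.le) (not_le_of_gt hlt)⟩
  rw [mem_filter, mem_powerset] at hEmem
  obtain ⟨hEsub, hEP⟩ := hEmem
  refine ⟨E, fun e he => mem_edgeFinset.mp (hEsub he), hEP, ?_⟩
  -- covering
  have hcover : ∀ e ∈ G.edgeFinset, ∃ f ∈ E, edgeDist G f e ≤ (r : ℕ∞) := by
    intro e he
    by_cases heE : e ∈ E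
    · refine ⟨e, heE, ?_⟩
      induction e using Sym2.ind with
      | _ a b =>
        refine le_trans (edgeDist_le_of_mem (Sym2.mem_mk_left a b) (Sym2.mem_mk_left a b)) ?_
        simp [SimpleGraph.edist_self]
    · have hnot : ¬ P (insert e E) := by
        intro hPins
        exact hEmax _ (mem_filter.mpr ⟨mem_powerset.mpr (insert_subset he hEsub), hPins⟩)
          (Finset.ssubset_insert heE)
      simp only [hP] at hnot
      push_neg at hnot
      obtain ⟨x, hx, y, hy, hxy, hlt⟩ := hnot
      have hle : ∀ u v : Sym2 (Fin n), edgeDist G u v < ((2 * k + 2 : ℕ) : ℕ∞) →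
          edgeDist G u v ≤ (r : ℕ∞) := by
        intro u v h
        have hne : edgeDist G u v ≠ ⊤ := h.ne_top
        lift edgeDist G u v to ℕ using hne with m hm
        have : m < 2 * k + 2 := by exact_mod_cast h
        exact_mod_cast Nat.lt_succ_iff.mp (by omega : m < r + 1)
      rw [mem_insert] at hx hy
      rcases hx with rfl | hx
      · rcases hy with rfl | hy
        · exact absurd rfl hxy
        · exact ⟨y, hy, by rw [edgeDist_comm]; exact hle _ _ hlt⟩
      · rcases hy with rfl | hy
        · exact ⟨x, hx, hle _ _ hlt⟩
        · exact absurd (hEP x hx y hy hxy) (not_le.mpr hlt)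
  -- counting
  have hcount : G.edgeFinset.card ≤ E.card * B := by
    have hsub : G.edgeFinset ⊆ E.biUnion
        (fun f => G.edgeFinset.filter fun e => edgeDist G f e ≤ (r : ℕ∞)) := by
      intro e he
      obtain ⟨f, hf, hfe⟩ := hcover e he
      exact mem_biUnion.mpr ⟨f, hf, mem_filter.mpr ⟨he, hfe⟩⟩
    calc G.edgeFinset.card
        ≤ ∑ f ∈ E, (G.edgeFinset.filter fun e => edgeDist G f e ≤ (r : ℕ∞)).card :=
          (card_le_card hsub).trans card_biUnion_le
      _ ≤ ∑ _f ∈ E, B := by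
          refine Finset.sum_le_sum fun f _ => ?_
          rw [hB, hS]
          exact near_card hd1 hreg f r _ fun e he =>
            ⟨mem_edgeFinset.mp (mem_filter.mp he).1, (mem_filter.mp he).2⟩
      _ = E.card * B := by rw [sum_const, smul_eq_mul]
  have hhs : n * d = 2 * G.edgeFinset.card := by
    have h1 : ∑ v : Fin n, G.degree v = n * d := by
      calc ∑ v : Fin n, G.degree v = ∑ _v : Fin n, d :=
            Finset.sum_congr rfl fun v _ => hreg v
        _ = n * d := by simp [Finset.card_univ]
    rw [← h1, G.sum_degrees_eq_twice_card_edges]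
  have hgeo : (d - 2) * S ≤ (d - 1) ^ r := by
    have h21 : d - 1 = (d - 2) + 1 := by omega
    rw [hS, h21]
    exact geo_le (d - 2) r
  -- pass to ℝ
  set D : ℝ := (d : ℝ) with hD
  have hD3 : (3 : ℝ) ≤ D := by rw [hD]; exact_mod_cast hd
  set M : ℝ := (G.edgeFinset.card : ℝ) with hM
  set EC : ℝ := (E.card : ℝ) with hEC
  set S' : ℝ := (S : ℝ) with hS'
  have hhsR : (n : ℝ) * D = 2 * M := by rw [hD, hM]; exact_mod_cast hhs
  have hcountR : M ≤ EC * (2 * (1 + D * S') * D) := by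
    rw [hM, hEC, hD, hS']
    have := hcount
    rw [hB] at this
    exact_mod_cast this
  have hgeoR : (D - 2) * S' ≤ (D - 1) ^ r := by
    rw [hS', hD]
    have h1 : ((d - 2 : ℕ) : ℝ) = (d : ℝ) - 2 := by
      rw [Nat.cast_sub (by omega)]; norm_num
    have h2 : ((d - 1 : ℕ) : ℝ) = (d : ℝ) - 1 := by
      rw [Nat.cast_sub (by omega)]; norm_num
    rw [← h1, ← h2]
    exact_mod_cast hgeo
  have hP1 : (1 : ℝ) ≤ (D - 1) ^ r := one_le_pow₀ (by linarith)
  have hSnn : (0 : ℝ) ≤ S' := by rw [hS']; positivity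
  have hDnn : (0 : ℝ) ≤ D := by linarith
  have h4nn : (0 : ℝ) ≤ 4 * EC * D := mul_nonneg (mul_nonneg (by norm_num) (by rw [hEC]; positivity)) hDnn
  have hECnn : (0 : ℝ) ≤ EC := by rw [hEC]; positivity
  have hDP : (1 : ℝ) ≤ D * (D - 1) ^ r := by nlinarith [hP1, hD3]
  have key : (n : ℝ) * (D - 2) * D ≤ EC * (4 * D * (D - 1) ^ (2 * k + 2)) * D := by
    calc (n : ℝ) * (D - 2) * D = (D - 2) * ((n : ℝ) * D) := by ring
      _ = (D - 2) * (2 * M) := by rw [hhsR]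
      _ ≤ (D - 2) * (2 * (EC * (2 * (1 + D * S') * D))) := by
          have h2 : (0 : ℝ) ≤ D - 2 := by linarith
          have h3 : 2 * M ≤ 2 * (EC * (2 * (1 + D * S') * D)) := by linarith
          exact mul_le_mul_of_nonneg_left h3 h2
      _ = 4 * EC * D * ((D - 2) + D * ((D - 2) * S')) := by ring
      _ ≤ 4 * EC * D * ((D - 2) + D * ((D - 1) ^ r)) := by
          refine mul_le_mul_of_nonneg_left ?_ h4nn
          have := mul_le_mul_of_nonneg_left hgeoR (by linarith : (0 : ℝ) ≤ D)
          linarith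
      _ ≤ 4 * EC * D * (D * (D - 1) ^ (2 * k + 2)) := by
          refine mul_le_mul_of_nonneg_left ?_ h4nn
          have hpow : (D - 1) ^ (2 * k + 2) = (D - 1) ^ r * (D - 1) := by
            rw [hr, ← pow_succ]
          rw [hpow]
          nlinarith [mul_nonneg (sub_nonneg.mpr hDP) (by linarith : (0 : ℝ) ≤ D - 2)]
      _ = EC * (4 * D * (D - 1) ^ (2 * k + 2)) * D := by ring
  have key2 : (n : ℝ) * (D - 2) ≤ EC * (4 * D * (D - 1) ^ (2 * k + 2)) :=
    le_of_mul_le_mul_right key (by linarith)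
  have hrpow : (D - 1) ^ (-((2 * k + 2 : ℕ) : ℝ)) = ((D - 1) ^ (2 * k + 2 : ℕ))⁻¹ := by
    rw [Real.rpow_neg (by linarith), Real.rpow_natCast]
  rw [hrpow]
  set X : ℝ := (D - 1) ^ (2 * k + 2) with hX
  have hXpos : (0 : ℝ) < X := pow_pos (by linarith : (0 : ℝ) < D - 1) _
  rw [div_le_iff₀ (by linarith : (0 : ℝ) < 4 * D)]
  have key3 : ((n : ℝ) * (D - 2) * X⁻¹) * X ≤ (EC * (4 * D)) * X := by
    have hXne : X ≠ 0 := ne_of_gt hXpos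
    have h1 : ((n : ℝ) * (D - 2) * X⁻¹) * X = (n : ℝ) * (D - 2) := by
      field_simp
    rw [h1, show (EC * (4 * D)) * X = EC * (4 * D * X) from by ring]
    exact key2
  exact le_of_mul_le_mul_right key3 hXpos
end

section
/- Let C ≥ 2 be a real number and let G be a finite simple graph on n ≥ 3 vertices satisfying λ₂(G) > (1 − 1/C)·λ_n(G). Then G is a C-expander; that is: (a) |N(X)| ≥ C|X| for every subset X ⊆ V(G) with |X| < n/(2C), and (b) e(X, Y) ≥ 1 for any two disjoint subsets X, Y ⊆ V(G) with |X|, |Y| ≥ n/(2C). -/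
open Matrix SimpleGraph

attribute [local instance] Classical.propDecidable

section Aux

local notation "⟪" x ", " y "⟫" => @inner ℝ _ _ x y

section spectral
variable {n : ℕ} {A : Matrix (Fin n) (Fin n) ℝ}

lemma dot_eq_inner (x y : EuclideanSpace ℝ (Fin n)) :
    (x : Fin n → ℝ) ⬝ᵥ (y : Fin n → ℝ) = ⟪x, y⟫ := by
  simp [PiLp.inner_apply, dotProduct, mul_comm]

lemma repr_mulVec (hA : A.IsHermitian) (f : EuclideanSpace ℝ (Fin n)) (i : Fin n) :
    hA.eigenvectorBasis.repr (WithLp.toLp 2 (A *ᵥ (f : Fin n → ℝ) : Fin n → ℝ)) i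
      = hA.eigenvalues i * hA.eigenvectorBasis.repr f i := by
  rw [OrthonormalBasis.repr_apply_apply, OrthonormalBasis.repr_apply_apply]
  rw [← dot_eq_inner, ← dot_eq_inner]
  have hAt : Aᵀ = A := by
    have := hA.eq
    rwa [conjTranspose_eq_transpose_of_trivial] at this
  calc (hA.eigenvectorBasis i : Fin n → ℝ) ⬝ᵥ (A *ᵥ (f : Fin n → ℝ))
      = (Aᵀ *ᵥ (hA.eigenvectorBasis i : Fin n → ℝ)) ⬝ᵥ (f : Fin n → ℝ) := by
        rw [dotProduct_mulVec, mulVec_transpose]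
    _ = (hA.eigenvalues i • (hA.eigenvectorBasis i : Fin n → ℝ)) ⬝ᵥ (f : Fin n → ℝ) := by
        rw [hAt]
        exact congrArg (· ⬝ᵥ (f : Fin n → ℝ)) (hA.mulVec_eigenvectorBasis i)
    _ = hA.eigenvalues i * ((hA.eigenvectorBasis i : Fin n → ℝ) ⬝ᵥ (f : Fin n → ℝ)) := by
        rw [smul_dotProduct]; rfl

lemma quad_eq (hA : A.IsHermitian) (f : EuclideanSpace ℝ (Fin n)) :
    (f : Fin n → ℝ) ⬝ᵥ (A *ᵥ (f : Fin n → ℝ))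
      = ∑ i, hA.eigenvalues i * (hA.eigenvectorBasis.repr f i)^2 := by
  rw [dot_eq_inner f (WithLp.toLp 2 (A *ᵥ (f : Fin n → ℝ) : Fin n → ℝ))]
  rw [← hA.eigenvectorBasis.repr.inner_map_map f _]
  rw [PiLp.inner_apply]
  refine Finset.sum_congr rfl fun i _ => ?_
  rw [repr_mulVec hA f i]
  simp [RCLike.inner_apply]
  ring

lemma norm_eq (hA : A.IsHermitian) (f : EuclideanSpace ℝ (Fin n)) :
    (f : Fin n → ℝ) ⬝ᵥ (f : Fin n → ℝ) = ∑ i, (hA.eigenvectorBasis.repr f i)^2 := by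
  rw [dot_eq_inner f f, ← hA.eigenvectorBasis.repr.inner_map_map f f, PiLp.inner_apply]
  refine Finset.sum_congr rfl fun i _ => ?_
  simp [RCLike.inner_apply, sq]

end spectral

section sorted
variable {n : ℕ} {A : Matrix (Fin n) (Fin n) ℝ}

lemma eig_le_max (hA : A.IsHermitian) (hn : 0 < n) (i : Fin n) :
    hA.eigenvalues i ≤ sortedEigs A ⟨n - 1, by omega⟩ := by
  rw [sortedEigs, dif_pos hA]
  set σ := Tuple.sort hA.eigenvalues with hσ
  have h1 : hA.eigenvalues i = (hA.eigenvalues ∘ σ) (σ.symm i) := by simp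
  rw [h1]
  exact Tuple.monotone_sort hA.eigenvalues (by
    show (σ.symm i : Fin n) ≤ _
    rw [Fin.le_def]
    have := (σ.symm i).isLt
    simp; omega)

lemma second_le_eig (hA : A.IsHermitian) (hn : 2 ≤ n) (i : Fin n)
    (hi : i ≠ Tuple.sort hA.eigenvalues ⟨0, by omega⟩) :
    sortedEigs A ⟨1, by omega⟩ ≤ hA.eigenvalues i := by
  rw [sortedEigs, dif_pos hA]
  set σ := Tuple.sort hA.eigenvalues with hσ
  have h1 : hA.eigenvalues i = (hA.eigenvalues ∘ σ) (σ.symm i) := by simp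
  rw [h1]
  refine Tuple.monotone_sort hA.eigenvalues ?_
  show (⟨1, by omega⟩ : Fin n) ≤ σ.symm i
  rw [Fin.le_def]
  have h2 : σ.symm i ≠ ⟨0, by omega⟩ := by
    intro h
    apply hi
    rw [← h]; simp
  have := Fin.val_ne_of_ne h2
  simp at this ⊢
  omega

end sorted

section AB
variable {n : ℕ} {A : Matrix (Fin n) (Fin n) ℝ}

lemma quad_le_max (hA : A.IsHermitian) (hn : 0 < n) (f : Fin n → ℝ) :
    f ⬝ᵥ (A *ᵥ f) ≤ sortedEigs A ⟨n - 1, by omega⟩ * (f ⬝ᵥ f) := by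
  rw [quad_eq hA (WithLp.toLp 2 f), norm_eq hA (WithLp.toLp 2 f), Finset.mul_sum]
  refine Finset.sum_le_sum fun i _ => ?_
  have h1 := eig_le_max hA hn i
  nlinarith [sq_nonneg (hA.eigenvectorBasis.repr (WithLp.toLp 2 f) i)]

lemma quad_ge_second (hA : A.IsHermitian) (hpsd : A.PosSemidef) (hn : 2 ≤ n)
    (hker : A *ᵥ (fun _ => (1 : ℝ)) = 0)
    (hpos : 0 < sortedEigs A ⟨1, by omega⟩)
    (f : Fin n → ℝ) (hf : ∑ v, f v = 0) :
    sortedEigs A ⟨1, by omega⟩ * (f ⬝ᵥ f) ≤ f ⬝ᵥ (A *ᵥ f) := by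
  set i₀ : Fin n := Tuple.sort hA.eigenvalues ⟨0, by omega⟩ with hi₀
  set o : EuclideanSpace ℝ (Fin n) := WithLp.toLp 2 (fun _ => (1 : ℝ)) with ho
  set d := hA.eigenvectorBasis.repr o with hd
  set c := hA.eigenvectorBasis.repr (WithLp.toLp 2 f) with hc
  -- the all-ones vector pairs to zero
  have hsum0 : ∑ i, hA.eigenvalues i * (d i)^2 = 0 := by
    rw [← quad_eq hA o]
    show (fun _ => (1:ℝ)) ⬝ᵥ (A *ᵥ fun _ => (1:ℝ)) = 0
    rw [hker, dotProduct_zero]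
  have hterm : ∀ i ∈ Finset.univ, hA.eigenvalues i * (d i)^2 = 0 := by
    rw [← Finset.sum_eq_zero_iff_of_nonneg]
    · exact hsum0
    · intro i _
      have := hpsd.eigenvalues_nonneg i
      positivity
  have hdzero : ∀ i, i ≠ i₀ → d i = 0 := by
    intro i hi
    have h1 := second_le_eig hA hn i hi
    have h2 := hterm i (Finset.mem_univ i)
    have h3 : 0 < hA.eigenvalues i := lt_of_lt_of_le hpos h1
    have h4 : (d i)^2 = 0 := by
      by_contra h
      exact h (by nlinarith)
    exact pow_eq_zero_iff (by norm_num) |>.mp h4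
  have hdne : d i₀ ≠ 0 := by
    intro h
    have : d = 0 := by
      ext i
      by_cases hi : i = i₀
      · rw [hi, h]; rfl
      · rw [hdzero i hi]; rfl
    have ho0 : o = 0 := hA.eigenvectorBasis.repr.map_eq_zero_iff.mp this
    have : (1 : ℝ) = 0 := congrFun (congrArg (fun (g : EuclideanSpace ℝ (Fin n)) => (g : Fin n → ℝ)) ho0) ⟨0, by omega⟩
    norm_num at this
  have hinner : ∑ i, d i * c i = 0 := by
    have h1 : (o : Fin n → ℝ) ⬝ᵥ (f : Fin n → ℝ) = 0 := by
      show (fun _ => (1:ℝ)) ⬝ᵥ f = 0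
      rw [dotProduct]
      simpa using hf
    have h2 : (o : Fin n → ℝ) ⬝ᵥ (f : Fin n → ℝ) = ∑ i, d i * c i := by
      rw [dot_eq_inner o (WithLp.toLp 2 f),
        ← hA.eigenvectorBasis.repr.inner_map_map o (WithLp.toLp 2 f)]
      rw [← hd, ← hc]
      simp [PiLp.inner_apply, RCLike.inner_apply]
      exact Finset.sum_congr rfl fun i _ => mul_comm _ _
    rw [← h2, h1]
  have hc0 : c i₀ = 0 := by
    have h1 : ∑ i, d i * c i = d i₀ * c i₀ := by
      refine Finset.sum_eq_single i₀ (fun i _ hi => by rw [hdzero i hi, zero_mul]) (fun h => absurd (Finset.mem_univ i₀) h)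
    rw [h1] at hinner
    exact (mul_eq_zero.mp hinner).resolve_left hdne
  rw [quad_eq hA (WithLp.toLp 2 f), norm_eq hA (WithLp.toLp 2 f), Finset.mul_sum]
  refine Finset.sum_le_sum fun i _ => ?_
  by_cases hi : i = i₀
  · rw [hi]
    rw [← hc] at *
    rw [hc0]
    simp
  · have h1 := second_le_eig hA hn i hi
    rw [← hc]
    nlinarith [sq_nonneg (c i)]

end AB

noncomputable def chi {n : ℕ} (S : Finset (Fin n)) : Fin n → ℝ := fun v => if v ∈ S then 1 else 0

lemma sum_chi {n : ℕ} (S : Finset (Fin n)) : ∑ v, chi S v = S.card := by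
  simp [chi]

lemma sum_lin {n : ℕ} (X Y : Finset (Fin n)) (α γ : ℝ) :
    ∑ v, (α * chi X v + chi Y v + γ) = α * X.card + Y.card + γ * n := by
  rw [Finset.sum_add_distrib, Finset.sum_add_distrib, ← Finset.mul_sum,
    sum_chi, sum_chi, Finset.sum_const]
  simp [mul_comm]

lemma sum_sq {n : ℕ} (X Y : Finset (Fin n)) (hdisj : Disjoint X Y) (α γ : ℝ) :
    ∑ v, (α * chi X v + chi Y v + γ)^2
      = (α^2 + 2*α*γ) * X.card + (1 + 2*γ) * Y.card + (γ^2) * n := by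
  have h : ∀ v, (α * chi X v + chi Y v + γ)^2
      = (α^2 + 2*α*γ) * chi X v + chi Y v * (1 + 2*γ) + γ^2 := by
    intro v
    by_cases hx : v ∈ X <;> by_cases hy : v ∈ Y
    · exact absurd hy (Finset.disjoint_left.mp hdisj hx)
    · simp [chi, hx, hy]; ring
    · simp [chi, hx, hy]; ring
    · simp [chi, hx, hy]
  rw [Finset.sum_congr rfl (fun v _ => h v)]
  rw [Finset.sum_add_distrib, Finset.sum_add_distrib, ← Finset.mul_sum, ← Finset.sum_mul,
    sum_chi, sum_chi, Finset.sum_const]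
  simp [mul_comm]

lemma qform_formula {n : ℕ} (G : SimpleGraph (Fin n)) (f : Fin n → ℝ) :
    f ⬝ᵥ (G.lapMatrix ℝ *ᵥ f)
      = (∑ i, ∑ j, if G.Adj i j then (f i - f j)^2 else 0) / 2 := by
  rw [← Matrix.toLinearMap₂'_apply', lapMatrix_toLinearMap₂']

lemma qform_cross_free {n : ℕ} (G : SimpleGraph (Fin n)) (X Y : Finset (Fin n))
    (hdisj : Disjoint X Y) (hno : ∀ u ∈ X, ∀ w ∈ Y, ¬ G.Adj u w) (t γ δ : ℝ) :
    (fun v => -t * chi X v + chi Y v + γ) ⬝ᵥ (G.lapMatrix ℝ *ᵥ (fun v => -t * chi X v + chi Y v + γ))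
      = (fun v => t * chi X v + chi Y v + δ) ⬝ᵥ (G.lapMatrix ℝ *ᵥ (fun v => t * chi X v + chi Y v + δ)) := by
  rw [qform_formula, qform_formula]
  congr 1
  refine Finset.sum_congr rfl fun i _ => Finset.sum_congr rfl fun j _ => ?_
  by_cases hadj : G.Adj i j
  · rw [if_pos hadj, if_pos hadj]
    have hAB : (chi X i - chi X j) * (chi Y i - chi Y j) = 0 := by
      by_cases hiX : i ∈ X <;> by_cases hjX : j ∈ X
      · simp [chi, hiX, hjX]
      · have hiY : i ∉ Y := Finset.disjoint_left.mp hdisj hiX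
        have hjY : j ∉ Y := fun hjY => hno i hiX j hjY hadj
        simp [chi, hiY, hjY]
      · have hjY : j ∉ Y := Finset.disjoint_left.mp hdisj hjX
        have hiY : i ∉ Y := fun hiY => hno j hjX i hiY hadj.symm
        simp [chi, hiY, hjY]
      · simp [chi, hiX, hjX]
    have e1 : ((-t * chi X i + chi Y i + γ) - (-t * chi X j + chi Y j + γ))^2
        = t^2 * (chi X i - chi X j)^2 - 2*t*((chi X i - chi X j) * (chi Y i - chi Y j))
          + (chi Y i - chi Y j)^2 := by ring
    have e2 : ((t * chi X i + chi Y i + δ) - (t * chi X j + chi Y j + δ))^2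
        = t^2 * (chi X i - chi X j)^2 + 2*t*((chi X i - chi X j) * (chi Y i - chi Y j))
          + (chi Y i - chi Y j)^2 := by ring
    rw [e1, e2, hAB]
    ring
  · rw [if_neg hadj, if_neg hadj]

-- monotonicity of sortedEigs
lemma sorted_mono {n : ℕ} {A : Matrix (Fin n) (Fin n) ℝ} (hA : A.IsHermitian)
    {i j : Fin n} (hij : i ≤ j) : sortedEigs A i ≤ sortedEigs A j := by
  rw [sortedEigs, dif_pos hA]
  exact Tuple.monotone_sort hA.eigenvalues hij

lemma key_lemma {n : ℕ} (hn : 3 ≤ n) (C : ℝ) (hC : 2 ≤ C)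
    (G : SimpleGraph (Fin n))
    (hratio : lapEig G 2 > (1 - 1 / C) * lapEig G n)
    (X Y : Finset (Fin n)) (hdisj : Disjoint X Y)
    (hXne : X.Nonempty) (hYne : Y.Nonempty)
    (hno : ∀ u ∈ X, ∀ w ∈ Y, ¬ G.Adj u w) :
    (2*C - 1)^2 * (X.card : ℝ) * (Y.card : ℝ)
      < ((n : ℝ) - X.card) * ((n : ℝ) - Y.card) := by
  have hpsd : (G.lapMatrix ℝ).PosSemidef := posSemidef_lapMatrix ℝ G
  have hA : (G.lapMatrix ℝ).IsHermitian := hpsd.1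
  have hn2 : 2 ≤ n := by omega
  have hn0 : 0 < n := by omega
  set l2 : ℝ := sortedEigs (G.lapMatrix ℝ) ⟨1, by omega⟩ with hl2
  set ln : ℝ := sortedEigs (G.lapMatrix ℝ) ⟨n - 1, by omega⟩ with hln
  have hl2eq : lapEig G 2 = l2 := by rw [lapEig, dif_pos (show 2 - 1 < n by omega)]
  have hlneq : lapEig G n = ln := by rw [lapEig, dif_pos (show n - 1 < n by omega)]
  rw [hl2eq, hlneq] at hratio
  have hC0 : (0:ℝ) < C := by linarith
  have hCne : C ≠ 0 := ne_of_gt hC0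
  have hCC : C * (1/C) = 1 := mul_one_div_cancel hCne
  have hl2ln : l2 ≤ ln := sorted_mono hA (by rw [Fin.le_def]; simp; omega)
  have hcoef : (0:ℝ) ≤ 1 - 1/C := by
    have h9 : 1/C ≤ 1/2 := by
      rw [div_le_div_iff₀ hC0 (by norm_num)]; linarith
    linarith
  have egap : C * ((1 - 1/C) * ln) = C * ln - ln := by
    calc C * ((1 - 1/C) * ln) = (C - C*(1/C)) * ln := by ring
      _ = (C - 1) * ln := by rw [hCC]
      _ = C * ln - ln := by ring
  have hmr := mul_lt_mul_of_pos_left hratio hC0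
  rw [egap] at hmr
  -- hmr : C * ln - ln < C * l2
  have hl2pos : 0 < l2 := by
    rcases lt_or_ge 0 l2 with h | h
    · exact h
    · exfalso
      have h9 : (1 - 1/C) * ln ≥ (1 - 1/C) * l2 := by nlinarith
      nlinarith
  have hlnpos : 0 < ln := lt_of_lt_of_le hl2pos hl2ln
  -- sizes
  set N : ℝ := (n : ℝ) with hN
  have hNpos : (0:ℝ) < N := by rw [hN]; positivity
  set a : ℝ := (X.card : ℝ) with ha
  set b : ℝ := (Y.card : ℝ) with hb
  have ha1 : 1 ≤ a := by rw [ha]; exact_mod_cast Finset.card_pos.mpr hXne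
  have hb1 : 1 ≤ b := by rw [hb]; exact_mod_cast Finset.card_pos.mpr hYne
  have habn : a + b ≤ N := by
    have h9 := Finset.card_le_card (Finset.subset_univ (X ∪ Y))
    rw [Finset.card_union_of_disjoint hdisj, Finset.card_univ, Fintype.card_fin] at h9
    rw [ha, hb, hN]
    exact_mod_cast h9
  have hNa : 0 < N - a := by linarith
  have hNb : 0 < N - b := by linarith
  have hApos : 0 < a * (N - a) := mul_pos (by linarith) hNa
  have hBpos : 0 < b * (N - b) := mul_pos (by linarith) hNb
  obtain ⟨t, htpos, ht2⟩ : ∃ t : ℝ, 0 < t ∧ t^2 * (a * (N - a)) = b * (N - b) := by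
    refine ⟨Real.sqrt (b * (N - b) / (a * (N - a))), Real.sqrt_pos.mpr (by positivity), ?_⟩
    rw [Real.sq_sqrt (by positivity)]
    field_simp
  -- the two test vectors
  set fm : Fin n → ℝ := fun v => -t * chi X v + chi Y v + (t*a - b)/N with hfm
  set fp : Fin n → ℝ := fun v => t * chi X v + chi Y v + (-(t*a) - b)/N with hfp
  have hsum : ∑ v, fm v = 0 := by
    simp only [hfm]
    rw [sum_lin, ← ha, ← hb, ← hN]
    field_simp
    ring
  have hnormm : fm ⬝ᵥ fm = (t^2 * (a*(N-a)) + b*(N-b) + 2*t*(a*b)) / N := by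
    show ∑ v, fm v * fm v = _
    have h9 : ∀ v, fm v * fm v = (-t * chi X v + chi Y v + (t*a - b)/N)^2 := by
      intro v; simp only [hfm]; ring
    rw [Finset.sum_congr rfl (fun v _ => h9 v), sum_sq X Y hdisj, ← ha, ← hb, ← hN]
    field_simp
    ring
  have hnormp : fp ⬝ᵥ fp = (t^2 * (a*(N-a)) + b*(N-b) - 2*t*(a*b)) / N := by
    show ∑ v, fp v * fp v = _
    have h9 : ∀ v, fp v * fp v = (t * chi X v + chi Y v + (-(t*a) - b)/N)^2 := by
      intro v; simp only [hfp]; ring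
    rw [Finset.sum_congr rfl (fun v _ => h9 v), sum_sq X Y hdisj, ← ha, ← hb, ← hN]
    field_simp
    ring
  -- spectral chain
  have hchain : l2 * (fm ⬝ᵥ fm) ≤ ln * (fp ⬝ᵥ fp) := by
    calc l2 * (fm ⬝ᵥ fm) ≤ fm ⬝ᵥ (G.lapMatrix ℝ *ᵥ fm) :=
          quad_ge_second hA hpsd hn2 (lapMatrix_mulVec_const_eq_zero G) hl2pos fm hsum
      _ = fp ⬝ᵥ (G.lapMatrix ℝ *ᵥ fp) := qform_cross_free G X Y hdisj hno t _ _
      _ ≤ ln * (fp ⬝ᵥ fp) := quad_le_max hA hn0 fp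
  rw [hnormm, hnormp, ← mul_div_assoc, ← mul_div_assoc,
    div_le_div_iff_of_pos_right hNpos] at hchain
  rw [ht2] at hchain
  clear_value fm fp l2 ln
  clear hfm hfp hsum hnormm hnormp fm fp hl2eq hlneq hl2 hln hpsd hA hno hdisj hXne hYne G
  set B : ℝ := b * (N - b) with hB
  set M : ℝ := a * b with hM
  have hMpos : 0 < M := by rw [hM]; exact mul_pos (by linarith) (by linarith)
  clear_value B M a b N
  have h2C : (0:ℝ) < 2*C - 1 := by linarith
  have h1 : 2*t*M*(l2 + ln) ≤ 2*B*(ln - l2) := by linarith only [hchain]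
  have htM : 0 < t * M := mul_pos htpos hMpos
  have h2tM : (0:ℝ) < 2*t*M := by linarith only [htM]
  have h2B : (0:ℝ) < 2*B := by linarith only [hBpos]
  have hgap1 : C * (ln - l2) < ln := by linarith only [hmr]
  have hgap2 : (2*C-1) * ln < C * (l2 + ln) := by linarith only [hmr]
  have s1 : 2*t*M*((2*C-1) * ln) < 2*t*M*(C * (l2 + ln)) := mul_lt_mul_of_pos_left hgap2 h2tM
  have s3 : C * (2*t*M*(l2+ln)) ≤ C * (2*B*(ln-l2)) := mul_le_mul_of_nonneg_left h1 hC0.le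
  have s5 : 2*B*(C*(ln-l2)) < 2*B*ln := mul_lt_mul_of_pos_left hgap1 h2B
  have s6 : (2*t*M*(2*C-1)) * ln < (2*B) * ln := by linarith only [s1, s3, s5]
  have h6 : t*M*(2*C-1) < B := by
    have h7 := lt_of_mul_lt_mul_right s6 hlnpos.le
    linarith only [h7]
  have h0 : 0 < t*M*(2*C-1) := mul_pos htM h2C
  have hsq : (t*M*(2*C-1))^2 < B^2 := by exact pow_lt_pow_left₀ h6 h0.le two_ne_zero
  have h7 : B * (M^2*(2*C-1)^2) < B^2 * (a*(N-a)) := by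
    have hm2 := mul_lt_mul_of_pos_right hsq hApos
    have e1 : (t*M*(2*C-1))^2 * (a*(N-a)) = (t^2 * (a*(N-a))) * (M^2*(2*C-1)^2) := by ring
    rw [e1, ht2] at hm2
    exact hm2
  have h8 : M^2*(2*C-1)^2 < B * (a*(N-a)) := by
    have e : B^2 * (a*(N-a)) = B * (B * (a*(N-a))) := by ring
    rw [e] at h7
    exact lt_of_mul_lt_mul_left h7 (le_of_lt hBpos)
  have e3 : M^2*(2*C-1)^2 = M * ((2*C-1)^2 * a * b) := by rw [hM]; ring
  have e4 : B * (a*(N-a)) = M * ((N - a) * (N - b)) := by rw [hB, hM]; ring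
  rw [e3, e4] at h8
  rw [ha, hb, hN] at h8 ⊢
  exact lt_of_mul_lt_mul_left h8 (by positivity)

end Aux

/-- Let `C ≥ 2` and let `G` be a graph on `n ≥ 3` vertices with
`λ₂(G) > (1 - 1/C)·λₙ(G)`. Then `G` is a `C`-expander:
(a) `|N(X)| ≥ C|X|` whenever `|X| < n/(2C)`, where `N(X)` is the external
neighbourhood of `X`; and
(b) any two disjoint sets `X, Y` with `|X|, |Y| ≥ n/(2C)` are joined by an edge. -/
theorem stmt18 {n : ℕ} (hn : 3 ≤ n) (C : ℝ) (hC : 2 ≤ C)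
    (G : SimpleGraph (Fin n))
    (hratio : lapEig G 2 > (1 - 1 / C) * lapEig G n) :
    (∀ X : Finset (Fin n), (X.card : ℝ) < (n : ℝ) / (2 * C) →
      C * (X.card : ℝ) ≤
        ((Finset.univ.filter (fun w => w ∉ X ∧ ∃ u ∈ X, G.Adj u w)).card : ℝ)) ∧
    (∀ X Y : Finset (Fin n), Disjoint X Y →
      (n : ℝ) / (2 * C) ≤ (X.card : ℝ) → (n : ℝ) / (2 * C) ≤ (Y.card : ℝ) →
      ∃ u ∈ X, ∃ w ∈ Y, G.Adj u w) := by
  have hC0 : (0:ℝ) < C := by linarith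
  have h2C0 : (0:ℝ) < 2*C := by linarith
  have h2C1 : (0:ℝ) < 2*C - 1 := by linarith
  constructor
  · -- part (a)
    intro X hX
    by_cases hXe : X = ∅
    · rw [hXe]
      simp
    · by_contra hcon
      push_neg at hcon
      set Nset := Finset.univ.filter (fun w => w ∉ X ∧ ∃ u ∈ X, G.Adj u w) with hNs
      set Y := Finset.univ \ (X ∪ Nset) with hY
      have hdisjXN : Disjoint X Nset :=
        Finset.disjoint_left.mpr fun {w} hw hwn => (Finset.mem_filter.mp hwn).2.1 hw
      have hdisjXY : Disjoint X Y :=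
        Finset.disjoint_left.mpr fun {w} hw hwy =>
          (Finset.mem_sdiff.mp hwy).2 (Finset.mem_union_left _ hw)
      have hno : ∀ u ∈ X, ∀ w ∈ Y, ¬ G.Adj u w := by
        intro u hu w hw hadj
        have hwnot : w ∉ X ∪ Nset := (Finset.mem_sdiff.mp hw).2
        have hwX : w ∉ X := fun h => hwnot (Finset.mem_union_left _ h)
        have hwN : w ∈ Nset := Finset.mem_filter.mpr ⟨Finset.mem_univ w, hwX, ⟨u, hu, hadj⟩⟩
        exact hwnot (Finset.mem_union_right _ hwN)
      -- cardinalities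
      have hXN : (X ∪ Nset).card = X.card + Nset.card := Finset.card_union_of_disjoint hdisjXN
      have hle : X.card + Nset.card ≤ n := by
        rw [← hXN]
        calc (X ∪ Nset).card ≤ (Finset.univ : Finset (Fin n)).card := Finset.card_le_univ _
          _ = n := by rw [Finset.card_univ, Fintype.card_fin]
      have hYc : Y.card = n - (X.card + Nset.card) := by
        rw [hY, Finset.card_sdiff_of_subset (Finset.subset_univ _), Finset.card_univ, Fintype.card_fin, hXN]
      set a : ℝ := (X.card : ℝ) with ha
      set m : ℝ := (Nset.card : ℝ) with hm
      set N : ℝ := (n : ℝ) with hN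
      have hb : (Y.card : ℝ) = N - a - m := by
        rw [hYc, Nat.cast_sub hle]
        push_cast
        ring
      have ha1 : 1 ≤ a := by
        rw [ha]
        exact_mod_cast Finset.card_pos.mpr (Finset.nonempty_of_ne_empty hXe)
      have hm0 : 0 ≤ m := by rw [hm]; positivity
      have h2Ca : 2*C*a < N := by
        rw [lt_div_iff₀ h2C0] at hX
        linarith [hX]
      have hbpos : (0:ℝ) < N - a - m := by nlinarith [hcon]
      have hYne : Y.Nonempty := by
        rw [← Finset.card_pos]
        have : (0:ℝ) < (Y.card : ℝ) := by rw [hb]; exact hbpos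
        exact_mod_cast this
      have key := key_lemma hn C hC G hratio X Y hdisjXY
        (Finset.nonempty_of_ne_empty hXe) hYne hno
      rw [← ha, ← hN, hb] at key
      -- key : (2C-1)^2 * a * (N-a-m) < (N-a) * (N-(N-a-m))
      have hNam : N - (N - a - m) = a + m := by ring
      rw [hNam] at key
      clear_value a m N
      clear hratio hno hdisjXY hdisjXN hYne hY hNs hYc hb hXN hle ha hm Y Nset
      -- contradiction chain
      have ha0 : (0:ℝ) < a := by linarith
      have hx : (0:ℝ) ≤ N - 2*C*a := by linarith
      have cert : (2*C-1)^2*a*(N-a-C*a) - (1+C)*a*(N-a)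
          = a*(a*(2*C*(2*C-1)*(C-2))) + a*((N-2*C*a)*(4*C^2-5*C)) := by ring
      have w1 : (0:ℝ) ≤ 2*C*(2*C-1)*(C-2) :=
        mul_nonneg (mul_nonneg (by linarith) (by linarith)) (by linarith)
      have w2 : (0:ℝ) ≤ (N-2*C*a)*(4*C^2-5*C) :=
        mul_nonneg hx (by nlinarith)
      have aw1 : (0:ℝ) ≤ a*(a*(2*C*(2*C-1)*(C-2))) :=
        mul_nonneg ha0.le (mul_nonneg ha0.le w1)
      have aw2 : (0:ℝ) ≤ a*((N-2*C*a)*(4*C^2-5*C)) := mul_nonneg ha0.le w2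
      have t1 : (1+C)*a*(N-a) ≤ (2*C-1)^2*a*(N-a-C*a) := by
        linarith only [cert, aw1, aw2]
      have hpos2 : (0:ℝ) < (2*C-1)^2*a := mul_pos (pow_pos h2C1 2) ha0
      have t2 : (2*C-1)^2*a*(N-a-C*a) < (2*C-1)^2*a*(N-a-m) := by
        have h9 : N-a-C*a < N-a-m := by linarith [hcon]
        calc (2*C-1)^2*a*(N-a-C*a) = ((2*C-1)^2*a)*(N-a-C*a) := by ring
          _ < ((2*C-1)^2*a)*(N-a-m) := mul_lt_mul_of_pos_left h9 hpos2
          _ = (2*C-1)^2*a*(N-a-m) := by ring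
      have hNa0 : (0:ℝ) < N - a := by linarith
      have t3 : (N-a)*(a+m) < (1+C)*a*(N-a) := by
        have h9 : a + m < (1+C)*a := by linarith [hcon]
        calc (N-a)*(a+m) < (N-a)*((1+C)*a) := mul_lt_mul_of_pos_left h9 hNa0
          _ = (1+C)*a*(N-a) := by ring
      linarith only [key, t1, t2, t3]
  · -- part (b)
    intro X Y hdisj hX hY
    by_contra hcon
    push_neg at hcon
    set a : ℝ := (X.card : ℝ) with ha
    set b : ℝ := (Y.card : ℝ) with hb
    set N : ℝ := (n : ℝ) with hN
    have hNpos : (0:ℝ) < N := by rw [hN]; positivity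
    have hXa : N ≤ 2*C*a := by
      rw [div_le_iff₀ h2C0] at hX
      linarith [hX]
    have hYb : N ≤ 2*C*b := by
      rw [div_le_iff₀ h2C0] at hY
      linarith [hY]
    have hXne : X.Nonempty := Finset.card_pos.mp (by
      have h9 : (0:ℝ) < a := by nlinarith
      rw [ha] at h9
      exact_mod_cast h9)
    have hYne : Y.Nonempty := Finset.card_pos.mp (by
      have h9 : (0:ℝ) < b := by nlinarith
      rw [hb] at h9
      exact_mod_cast h9)
    have key := key_lemma hn C hC G hratio X Y hdisj hXne hYne hcon
    rw [← ha, ← hb, ← hN] at key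
    -- sizes: a ≤ N, b ≤ N
    have haN : a ≤ N := by
      rw [ha, hN]
      exact_mod_cast (by simpa using Finset.card_le_univ X : X.card ≤ n)
    have hbN : b ≤ N := by
      rw [hb, hN]
      exact_mod_cast (by simpa using Finset.card_le_univ Y : Y.card ≤ n)
    clear_value a b N
    clear hcon hratio ha hb
    have h1 : N - a ≤ (2*C-1)*a := by linarith
    have h2 : N - b ≤ (2*C-1)*b := by linarith
    have ha0 : (0:ℝ) < a := by nlinarith
    have hmul : (N-a)*(N-b) ≤ ((2*C-1)*a)*((2*C-1)*b) :=
      mul_le_mul h1 h2 (by linarith) (by positivity)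
    nlinarith [key, hmul]
end
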